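/- arXiv:1301.3007 — 11 statements merged into one kernel-verified Lean document; each statement's English description precedes it below -/
import Mathlib

section
/- Fundamental diffusion equation: for the D-iteration defined by F_0 = B, F_n = P_{i_n} F_{n−1}, H_0 = 0, H_n = H_{n−1} + J_{i_n} F_{n−1}, one has for all n: H_n + F_n = P·H_n + F_0. -/
open Matrix BigOperators

/-- fundamental diffusion equation `H_n + F_n = P·H_n + F_0`. -/
theorem fundamental_diffusion_equation {N : ℕ} (P : Matrix (Fin N) (Fin N) ℝ)
    (B : Fin N → ℝ) (ι : ℕ → Fin N) (F H : ℕ → Fin N → ℝ)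
    (hF0 : F 0 = B) (hH0 : H 0 = 0)
    (hF : ∀ n, F (n + 1) =
      (1 - Matrix.single (ι n) (ι n) 1 + P * Matrix.single (ι n) (ι n) 1) *ᵥ F n)
    (hH : ∀ n, H (n + 1) = H n + Matrix.single (ι n) (ι n) 1 *ᵥ F n) :
    ∀ n, H n + F n = P *ᵥ H n + F 0 := by
  intro n
  induction n with
  | zero => simp [hH0]
  | succ n ih =>
    rw [hF n, hH n]
    simp only [Matrix.add_mulVec, Matrix.sub_mulVec, Matrix.one_mulVec,
      Matrix.mulVec_mulVec, Matrix.mulVec_add]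
    rw [← Matrix.mulVec_mulVec]
    abel_nf
    rw [← add_assoc, ih]
    abel
end

section
/- For the D-iteration, H_n satisfies the recursion H_n = (I − J_{i_n}(I − P)) H_{n−1} + J_{i_n} B. -/
open Matrix BigOperators

lemma history_inv {N : ℕ} (P : Matrix (Fin N) (Fin N) ℝ)
    (B : Fin N → ℝ) (ι : ℕ → Fin N) (F H : ℕ → Fin N → ℝ)
    (hF0 : F 0 = B) (hH0 : H 0 = 0)
    (hF : ∀ n, F (n + 1) =
      (1 - single (ι n) (ι n) 1 + P * single (ι n) (ι n) 1) *ᵥ F n)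
    (hH : ∀ n, H (n + 1) = H n + single (ι n) (ι n) 1 *ᵥ F n) :
    ∀ n, F n + (1 - P) *ᵥ H n = B := by
  intro n
  induction n with
  | zero => simp [hF0, hH0]
  | succ n ih =>
    rw [hF n, hH n]
    set J : Matrix (Fin N) (Fin N) ℝ := single (ι n) (ι n) 1
    calc (1 - J + P * J) *ᵥ F n + (1 - P) *ᵥ (H n + J *ᵥ F n)
        = F n + (1 - P) *ᵥ H n := by
          simp only [Matrix.add_mulVec, Matrix.sub_mulVec, Matrix.one_mulVec,
            Matrix.mulVec_add, ← Matrix.mulVec_mulVec]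
          abel
      _ = B := ih

/-- the history vector satisfies the recursion
`H_n = (I - J_{i_n}(I - P)) H_{n-1} + J_{i_n} B`. -/
theorem history_recursion {N : ℕ} (P : Matrix (Fin N) (Fin N) ℝ)
    (B : Fin N → ℝ) (ι : ℕ → Fin N) (F H : ℕ → Fin N → ℝ)
    (hF0 : F 0 = B) (hH0 : H 0 = 0)
    (hF : ∀ n, F (n + 1) =
      (1 - single (ι n) (ι n) 1 + P * single (ι n) (ι n) 1) *ᵥ F n)
    (hH : ∀ n, H (n + 1) = H n + single (ι n) (ι n) 1 *ᵥ F n) :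
    ∀ n, H (n + 1) =
      (1 - single (ι n) (ι n) 1 * (1 - P)) *ᵥ H n +
        single (ι n) (ι n) 1 *ᵥ B := by
  intro n
  have inv := history_inv P B ι F H hF0 hH0 hF hH n
  rw [hH n]
  set J : Matrix (Fin N) (Fin N) ℝ := single (ι n) (ι n) 1
  have : F n = B - (1 - P) *ᵥ H n := by rw [← inv]; abel
  rw [this]
  simp only [Matrix.sub_mulVec, Matrix.one_mulVec, Matrix.mulVec_sub,
    ← Matrix.mulVec_mulVec]
  abel
end

section
/- Fundamental diffusion equation with added fluids: if F_n = P_{i_n}(F_{n−1} + G_{n−1}) and H_n = H_{n−1} + J_{i_n}(F_{n−1} + G_{n−1}) with F_0 = B, H_0 = 0, then for all n: H_n + F_n = P·H_n + F_0 + ∑_{i=0}^{n−1} G_i. -/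
open Matrix BigOperators

/-- fundamental diffusion equation with added fluids:
`H_n + F_n = P·H_n + F_0 + ∑_{i=0}^{n-1} G_i`. -/
theorem fundamental_diffusion_equation_fluids {N : ℕ} (P : Matrix (Fin N) (Fin N) ℝ)
    (B : Fin N → ℝ) (G : ℕ → Fin N → ℝ) (ι : ℕ → Fin N) (F H : ℕ → Fin N → ℝ)
    (hF0 : F 0 = B) (hH0 : H 0 = 0)
    (hF : ∀ n, F (n + 1) =
      (1 - Matrix.single (ι n) (ι n) 1 + P * Matrix.single (ι n) (ι n) 1) *ᵥ (F n + G n))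
    (hH : ∀ n, H (n + 1) = H n + Matrix.single (ι n) (ι n) 1 *ᵥ (F n + G n)) :
    ∀ n, H n + F n = P *ᵥ H n + F 0 + ∑ i ∈ Finset.range n, G i := by
  intro n
  induction n with
  | zero => simp [hH0]
  | succ n ih =>
    rw [hF n, hH n, Finset.sum_range_succ]
    simp only [add_mulVec, sub_mulVec, one_mulVec, mulVec_add, ← mulVec_mulVec] at *
    linear_combination ih
end

section
/- If there exists a strictly positive vector V such that for every column j, ∑_i |P_{ij}| v_i ≤ v_j, then the weighted ℓ¹-norm |F_n|_v = ∑_i |v_i (F_n)_i| is non-increasing along the D-iteration: |F_{n+1}|_v ≤ |F_n|_v for any choice of the sequence I. -/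
open Matrix BigOperators

/-- if `v > 0` and `∑_i |P_{ij}| v_i ≤ v_j` for all columns `j`, then the
weighted ℓ¹-norm `|F_n|_v = ∑_i |v_i (F_n)_i|` is non-increasing along the D-iteration. -/
theorem weighted_norm_nonincreasing {N : ℕ} (P : Matrix (Fin N) (Fin N) ℝ)
    (v : Fin N → ℝ) (hv : ∀ i, 0 < v i)
    (hcol : ∀ j, ∑ i, |P i j| * v i ≤ v j)
    (ι : ℕ → Fin N) (F : ℕ → Fin N → ℝ)
    (hF : ∀ n, F (n + 1) =
      (1 - Matrix.single (ι n) (ι n) 1 + P * Matrix.single (ι n) (ι n) 1) *ᵥ F n) :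
    ∀ n, ∑ i, |v i * F (n + 1) i| ≤ ∑ i, |v i * F n i| := by
  intro n
  set i := ι n with hi
  set f := F n i with hfdef
  have hbasis : (Matrix.single i i (1:ℝ) *ᵥ F n) = fun j => if j = i then f else 0 := by
    funext j
    simp only [Matrix.mulVec, Matrix.single, Matrix.of_apply, ite_and, dotProduct]
    by_cases h : j = i
    · simp [h, Finset.sum_ite_eq', hfdef]
    · simp only [h, if_false]
      simp [Finset.sum_ite_eq']
      exact fun h' => absurd h'.symm h
  have hEnt : ∀ j, F (n + 1) j
      = F n j - (if j = i then f else 0) + P j i * f := by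
    intro j
    rw [hF n]
    rw [Matrix.add_mulVec, Matrix.sub_mulVec, Matrix.one_mulVec,
      ← Matrix.mulVec_mulVec, hbasis]
    simp only [Pi.add_apply, Pi.sub_apply, Matrix.mulVec, dotProduct, mul_ite, mul_zero,
      Finset.sum_ite_eq', Finset.mem_univ, if_true]
  have him : F (n + 1) i = P i i * f := by rw [hEnt i]; simp [hfdef]
  have hne : ∀ j, j ≠ i → F (n + 1) j = F n j + P j i * f := by
    intro j hj; rw [hEnt j]; simp [hj]
  have habs : ∀ j, |v j * (P j i * f)| = |P j i| * v j * |f| := by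
    intro j
    rw [abs_mul, abs_mul, abs_of_pos (hv j)]
    ring
  have key : ∑ j, |v j * F (n + 1) j|
      ≤ (∑ j ∈ Finset.univ \ {i}, |v j * F n j|) + ∑ j, |P j i| * v j * |f| := by
    rw [Finset.sum_eq_sum_sdiff_singleton_add (Finset.mem_univ i)
          (fun j => |v j * F (n + 1) j|),
        Finset.sum_eq_sum_sdiff_singleton_add (Finset.mem_univ i)
          (fun j => |P j i| * v j * |f|)]
    have h1 : ∑ j ∈ Finset.univ \ ({i} : Finset (Fin N)), |v j * F (n + 1) j|
        ≤ ∑ j ∈ Finset.univ \ ({i} : Finset (Fin N)),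
            (|v j * F n j| + |P j i| * v j * |f|) := by
      apply Finset.sum_le_sum
      intro j hj
      rw [Finset.mem_sdiff, Finset.mem_singleton] at hj
      rw [hne j hj.2, mul_add]
      calc |v j * F n j + v j * (P j i * f)|
          ≤ |v j * F n j| + |v j * (P j i * f)| := abs_add_le _ _
        _ = |v j * F n j| + |P j i| * v j * |f| := by rw [habs j]
    have h2 : |v i * F (n + 1) i| = |P i i| * v i * |f| := by
      rw [him, habs i]
    rw [Finset.sum_add_distrib] at h1
    linarith
  have hsum : ∑ j, |P j i| * v j * |f| ≤ v i * |f| := by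
    rw [← Finset.sum_mul]
    exact mul_le_mul_of_nonneg_right (hcol i) (abs_nonneg f)
  have hfin : (∑ j ∈ Finset.univ \ {i}, |v j * F n j|) + v i * |f|
      ≤ ∑ j, |v j * F n j| := by
    rw [Finset.sum_eq_sum_sdiff_singleton_add (Finset.mem_univ i)
          (fun j => |v j * F n j|)]
    have : v i * |f| = |v i * F n i| := by
      rw [abs_mul, abs_of_pos (hv i), hfdef]
    linarith
  linarith
end

section
/- If the spectral radius of P is strictly less than 1, B ≥ 0 (entrywise), and the sequence I is fair (each index occurs infinitely often), then H_n(P, B, I) converges to the unique solution X of X = P X + B, and F_n → 0. -/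
open Matrix BigOperators Filter Topology
open scoped NNReal ENNReal

section Aux

/-- Entrywise powers of a real matrix tend to zero when all complex eigenvalues
have norm less than one. -/
lemma diter_pow_entry_tendsto_zero {N : ℕ} (hN : 0 < N) (P : Matrix (Fin N) (Fin N) ℝ)
    (hρ : ∀ μ ∈ spectrum ℂ (P.map (algebraMap ℝ ℂ)), ‖μ‖ < 1) :
    ∀ i j, Tendsto (fun n => (P ^ n) i j) atTop (𝓝 0) := by
  haveI : NeZero N := ⟨hN.ne'⟩
  set A := P.map (algebraMap ℝ ℂ) with hA
  set T := Matrix.toEuclideanCLM (𝕜 := ℂ) A with hT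
  have hspec : spectrum ℂ T = spectrum ℂ A :=
    AlgEquiv.spectrum_eq (Matrix.toEuclideanCLM (𝕜 := ℂ) (n := Fin N) : _ ≃⋆ₐ[ℂ] _) A
  have hfin : (spectrum ℂ A).Finite := A.finite_spectrum
  have hne : (spectrum ℂ T).Nonempty := spectrum.nonempty T
  obtain ⟨μ₀, hμ₀mem, hμ₀max⟩ := Set.Finite.exists_maximalFor (fun μ => ‖μ‖) _ hfin (hspec ▸ hne)
  have hbound : ∀ μ ∈ spectrum ℂ A, ‖μ‖ ≤ ‖μ₀‖ := by
    intro μ hμ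
    rcases le_total ‖μ‖ ‖μ₀‖ with h | h
    · exact h
    · exact hμ₀max hμ h
  set r : ℝ := (‖μ₀‖ + 1) / 2 with hr
  have hμ₀lt : ‖μ₀‖ < 1 := hρ μ₀ hμ₀mem
  have hr0 : 0 < r := by positivity
  have hr1 : r < 1 := by rw [hr]; linarith
  have hμ₀r : ‖μ₀‖ < r := by rw [hr]; linarith
  set r' : ℝ≥0 := ⟨r, hr0.le⟩ with hr'
  have hrad : spectralRadius ℂ T < r' := by
    apply spectrum.spectralRadius_lt_of_forall_lt_of_nonempty hne
    intro k hk
    have : ‖k‖ < r := lt_of_le_of_lt (hbound k (hspec ▸ hk)) hμ₀r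
    exact_mod_cast this
  have hG := spectrum.pow_nnnorm_pow_one_div_tendsto_nhds_spectralRadius T
  have hev : ∀ᶠ n : ℕ in atTop, (‖T ^ n‖₊ : ENNReal) ^ (1 / (n:ℝ)) < (r' : ENNReal) :=
    hG.eventually_lt_const (by exact_mod_cast hrad)
  rw [eventually_atTop] at hev
  obtain ⟨n₀, hn₀⟩ := hev
  have key : ∀ n ≥ max n₀ 1, ∀ i j, ‖(A ^ n) i j‖ ≤ r ^ n := by
    intro n hn i j
    have hn1 : 1 ≤ n := le_trans (le_max_right _ _) hn
    have hnn0 : n₀ ≤ n := le_trans (le_max_left _ _) hn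
    have hTn : ‖T ^ n‖ < r ^ n := by
      have h := hn₀ n hnn0
      have hne' : (n : ℝ) ≠ 0 := Nat.cast_ne_zero.2 (by omega)
      have h2 : ((‖T ^ n‖₊ : ENNReal) ^ (1 / (n:ℝ))) ^ (n:ℝ) < ((r' : ENNReal)) ^ (n:ℝ) := by
        apply ENNReal.rpow_lt_rpow h (by positivity)
      rw [← ENNReal.rpow_mul, one_div, inv_mul_cancel₀ hne', ENNReal.rpow_one,
        ENNReal.rpow_natCast] at h2
      have h3 : (‖T ^ n‖₊ : ENNReal) < ((r' ^ n : ℝ≥0) : ENNReal) := by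
        rwa [ENNReal.coe_pow]
      have h4 : ‖T ^ n‖₊ < r' ^ n := by exact_mod_cast h3
      calc ‖T ^ n‖ = (‖T ^ n‖₊ : ℝ) := rfl
        _ < ((r' ^ n : ℝ≥0) : ℝ) := by exact_mod_cast h4
        _ = r ^ n := by push_cast; rfl
    have hentry : ‖(A ^ n) i j‖ ≤ ‖T ^ n‖ := by
      have hTn' : T ^ n = Matrix.toEuclideanCLM (𝕜 := ℂ) (A ^ n) := (map_pow _ _ _).symm
      have hx : ((T ^ n) (EuclideanSpace.single j 1)) i = (A ^ n) i j := by
        rw [hTn']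
        rw [show (EuclideanSpace.single j (1:ℂ)) = (WithLp.equiv 2 _).symm (Pi.single j 1) from rfl]
        rw [WithLp.equiv_symm_apply, Matrix.toEuclideanCLM_toLp]
        simp [Matrix.toLin'_apply, Matrix.mulVec_single]
      calc ‖(A ^ n) i j‖ = ‖((T ^ n) (EuclideanSpace.single j 1)) i‖ := by rw [hx]
        _ ≤ ‖(T ^ n) (EuclideanSpace.single j 1)‖ := by
            rw [EuclideanSpace.norm_eq]
            have h1 : ‖((T ^ n) (EuclideanSpace.single j 1)) i‖ ^ 2 ≤
                ∑ k, ‖((T ^ n) (EuclideanSpace.single j 1)) k‖ ^ 2 :=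
              Finset.single_le_sum (f := fun k => ‖((T ^ n) (EuclideanSpace.single j 1)) k‖ ^ 2)
                (fun k _ => sq_nonneg _) (Finset.mem_univ i)
            have := Real.sqrt_le_sqrt h1
            rwa [Real.sqrt_sq (norm_nonneg _)] at this
        _ ≤ ‖T ^ n‖ * ‖EuclideanSpace.single j (1:ℂ)‖ := (T ^ n).le_opNorm _
        _ = ‖T ^ n‖ := by rw [EuclideanSpace.norm_single]; simp
    exact hentry.trans hTn.le
  intro i j
  apply squeeze_zero_norm' (a := fun n => r ^ n)
  · rw [eventually_atTop]
    refine ⟨max n₀ 1, fun n hn => ?_⟩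
    have h := key n hn i j
    have hAP : (A ^ n) i j = (((P ^ n) i j : ℝ) : ℂ) := by
      rw [hA, show P.map (algebraMap ℝ ℂ) = (algebraMap ℝ ℂ).mapMatrix P from rfl, ← map_pow]
      rfl
    rw [hAP, Complex.norm_real] at h
    exact h
  · exact tendsto_pow_atTop_nhds_zero_of_lt_one hr0.le hr1

/-- The inverse of `1 - P` exists and is entrywise nonnegative. -/
lemma diter_inv_exists {N : ℕ} (P : Matrix (Fin N) (Fin N) ℝ)
    (hPpos : ∀ i j, 0 ≤ P i j)
    (hone : IsUnit ((1 : Matrix (Fin N) (Fin N) ℂ) - P.map (algebraMap ℝ ℂ)))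
    (hpow : ∀ i j, Tendsto (fun n => (P ^ n) i j) atTop (𝓝 0)) :
    ∃ Q : Matrix (Fin N) (Fin N) ℝ, (1 - P) * Q = 1 ∧ Q * (1 - P) = 1 ∧ ∀ i j, 0 ≤ Q i j := by
  set A := P.map (algebraMap ℝ ℂ) with hA
  have hmap : (1 : Matrix (Fin N) (Fin N) ℂ) - A = ((1 - P).map (algebraMap ℝ ℂ)) := by
    rw [show ((1 - P).map (algebraMap ℝ ℂ)) = (algebraMap ℝ ℂ).mapMatrix (1 - P) from rfl,
      map_sub]
    congr 1
    simp
  have hdet : IsUnit (1 - P).det := by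
    have h1 : IsUnit ((1 : Matrix (Fin N) (Fin N) ℂ) - A).det :=
      (Matrix.isUnit_iff_isUnit_det _).1 hone
    rw [hmap] at h1
    rw [show ((1 - P).map (algebraMap ℝ ℂ)) = (algebraMap ℝ ℂ).mapMatrix (1 - P) from rfl] at h1
    rw [← RingHom.map_det] at h1
    have h2 : (algebraMap ℝ ℂ) (1 - P).det ≠ 0 := h1.ne_zero
    have h3 : (1 - P).det ≠ 0 := fun h => h2 (by rw [h, map_zero])
    exact isUnit_iff_ne_zero.2 h3
  set Q := (1 - P)⁻¹ with hQ
  have hQl : (1 - P) * Q = 1 := Matrix.mul_nonsing_inv _ hdet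
  have hQr : Q * (1 - P) = 1 := Matrix.nonsing_inv_mul _ hdet
  refine ⟨Q, hQl, hQr, fun i j => ?_⟩
  have key : ∀ n : ℕ, Q = (∑ k ∈ Finset.range n, P ^ k) + P ^ n * Q := by
    intro n
    have h1 : (∑ k ∈ Finset.range n, P ^ k) * (1 - P) = 1 - P ^ n := by
      have h0 := geom_sum_mul P n
      have h2 : (∑ k ∈ Finset.range n, P ^ k) * (1 - P) = -((∑ k ∈ Finset.range n, P ^ k) * (P - 1)) := by
        rw [← mul_neg, neg_sub]
      rw [h2, h0, neg_sub]
    calc Q = 1 * Q := (one_mul Q).symm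
      _ = ((∑ k ∈ Finset.range n, P ^ k) * (1 - P) + P ^ n) * Q := by rw [h1, sub_add_cancel]
      _ = (∑ k ∈ Finset.range n, P ^ k) * ((1 - P) * Q) + P ^ n * Q := by
          rw [add_mul, mul_assoc]
      _ = (∑ k ∈ Finset.range n, P ^ k) + P ^ n * Q := by rw [hQl, mul_one]
  have hPk : ∀ (n : ℕ) i j, 0 ≤ (P ^ n) i j := by
    intro n
    induction n with
    | zero => intro i j; by_cases h : i = j <;> simp [pow_zero, Matrix.one_apply, h]
    | succ n ih =>
      intro i j
      rw [pow_succ, Matrix.mul_apply]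
      exact Finset.sum_nonneg fun k _ => mul_nonneg (ih i k) (hPpos k j)
  have htendsto : Tendsto (fun n => ((∑ k ∈ Finset.range n, P ^ k) : Matrix _ _ ℝ) i j) atTop (𝓝 (Q i j)) := by
    have heq : ∀ n, ((∑ k ∈ Finset.range n, P ^ k) : Matrix _ _ ℝ) i j = Q i j - (P ^ n * Q) i j := by
      intro n
      have := key n
      have h2 : Q i j = ((∑ k ∈ Finset.range n, P ^ k) + P ^ n * Q) i j := by rw [← this]
      simp only [Matrix.add_apply] at h2
      linarith
    simp_rw [heq]
    have hmulz : Tendsto (fun n => (P ^ n * Q) i j) atTop (𝓝 0) := by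
      simp_rw [Matrix.mul_apply]
      have : Tendsto (fun n => ∑ k, (P ^ n) i k * Q k j) atTop (𝓝 (∑ k : Fin N, 0 * Q k j)) := by
        apply tendsto_finset_sum
        intro k _
        exact (hpow i k).mul tendsto_const_nhds
      simpa using this
    have := tendsto_const_nhds (α := ℕ) (x := Q i j) |>.sub hmulz
    simpa using this
  refine ge_of_tendsto htendsto ?_
  filter_upwards with n
  simp only [Matrix.sum_apply]
  exact Finset.sum_nonneg fun k _ => hPk k i j

end Aux

set_option maxHeartbeats 1000000 in
/-- if `ρ(P) < 1`, `B ≥ 0`, and the sequence is fair, then `H_n`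
converges to the unique solution of `X = P X + B`, and `F_n → 0`. -/
theorem diteration_converges {N : ℕ} (P : Matrix (Fin N) (Fin N) ℝ) (B : Fin N → ℝ)
    (hPpos : ∀ i j, 0 ≤ P i j) (hB : ∀ i, 0 ≤ B i)
    (hρ : ∀ μ ∈ spectrum ℂ (P.map (algebraMap ℝ ℂ)), ‖μ‖ < 1)
    (ι : ℕ → Fin N) (hfair : ∀ i : Fin N, ∀ m : ℕ, ∃ n ≥ m, ι n = i)
    (F H : ℕ → Fin N → ℝ) (hF0 : F 0 = B) (hH0 : H 0 = 0)
    (hF : ∀ n, F (n + 1) =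
      (1 - Matrix.single (ι n) (ι n) 1 + P * Matrix.single (ι n) (ι n) 1) *ᵥ F n)
    (hH : ∀ n, H (n + 1) = H n + Matrix.single (ι n) (ι n) 1 *ᵥ F n) :
    ∃ X : Fin N → ℝ, X = P *ᵥ X + B ∧ (∀ Y : Fin N → ℝ, Y = P *ᵥ Y + B → Y = X) ∧
      Tendsto H atTop (𝓝 X) ∧ Tendsto F atTop (𝓝 0) := by
  rcases Nat.eq_zero_or_pos N with hN | hN
  · subst hN
    refine ⟨0, Subsingleton.elim _ _, fun Y _ => Subsingleton.elim _ _, ?_, ?_⟩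
    · have : H = fun _ => 0 := funext fun n => Subsingleton.elim _ _
      rw [this]; exact tendsto_const_nhds
    · have : F = fun _ => 0 := funext fun n => Subsingleton.elim _ _
      rw [this]; exact tendsto_const_nhds
  -- main case
  have hpow := diter_pow_entry_tendsto_zero hN P hρ
  have hone : IsUnit ((1 : Matrix (Fin N) (Fin N) ℂ) - P.map (algebraMap ℝ ℂ)) := by
    have h1 : (1 : ℂ) ∉ spectrum ℂ (P.map (algebraMap ℝ ℂ)) := fun h => by
      have := hρ 1 h; simp at this
    have := spectrum.notMem_iff.1 h1
    rwa [_root_.map_one] at this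
  obtain ⟨Q, hQl, hQr, hQpos⟩ := diter_inv_exists P hPpos hone hpow
  set X : Fin N → ℝ := Q *ᵥ B with hX
  -- (1 - P) *ᵥ X = B
  have hXeq : (1 - P) *ᵥ X = B := by
    rw [hX, Matrix.mulVec_mulVec, hQl, Matrix.one_mulVec]
  have hXsol : X = P *ᵥ X + B := by
    rw [← hXeq, Matrix.sub_mulVec, Matrix.one_mulVec]
    funext j; simp
  have huniq : ∀ Y : Fin N → ℝ, Y = P *ᵥ Y + B → Y = X := by
    intro Y hY
    have h1 : (1 - P) *ᵥ Y = B := by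
      rw [Matrix.sub_mulVec, Matrix.one_mulVec]
      funext j
      have := congrFun hY j
      simp only [Pi.add_apply] at this
      simp [this]
    calc Y = (1 : Matrix (Fin N) (Fin N) ℝ) *ᵥ Y := (Matrix.one_mulVec Y).symm
      _ = (Q * (1 - P)) *ᵥ Y := by rw [hQr]
      _ = Q *ᵥ ((1 - P) *ᵥ Y) := (Matrix.mulVec_mulVec _ _ _).symm
      _ = Q *ᵥ B := by rw [h1]
      _ = X := rfl
  -- entrywise recurrences
  have hJvec : ∀ (i : Fin N) (v : Fin N → ℝ),
      (Matrix.single i i (1:ℝ)) *ᵥ v = fun j => if j = i then v i else 0 := by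
    intro i v
    funext j
    simp [Matrix.mulVec, dotProduct, Matrix.single, ite_and, eq_comm]
  have hFcoord : ∀ n j, F (n+1) j = (if j = ι n then 0 else F n j) + P j (ι n) * F n (ι n) := by
    intro n j
    rw [hF n]
    have hsplit : (1 - Matrix.single (ι n) (ι n) 1 + P * Matrix.single (ι n) (ι n) 1) *ᵥ F n
        = F n - (Matrix.single (ι n) (ι n) 1) *ᵥ F n
          + P *ᵥ ((Matrix.single (ι n) (ι n) 1) *ᵥ F n) := by
      rw [Matrix.add_mulVec, Matrix.sub_mulVec, Matrix.one_mulVec, ← Matrix.mulVec_mulVec]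
    rw [hsplit, hJvec]
    simp only [Pi.add_apply, Pi.sub_apply]
    have hPv : (P *ᵥ (fun k => if k = ι n then F n (ι n) else 0)) j = P j (ι n) * F n (ι n) := by
      simp [Matrix.mulVec, dotProduct, mul_ite, Finset.sum_ite_eq']
    rw [hPv]
    by_cases h : j = ι n
    · subst h; simp
    · simp [h]
  have hFpos : ∀ n j, 0 ≤ F n j := by
    intro n
    induction n with
    | zero => intro j; rw [hF0]; exact hB j
    | succ n ih =>
      intro j
      rw [hFcoord n j]
      have h1 : 0 ≤ (if j = ι n then 0 else F n j) := by
        split <;> [rfl; exact ih j]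
      exact add_nonneg h1 (mul_nonneg (hPpos j (ι n)) (ih (ι n)))
  -- invariant
  have hinv : ∀ n, F n + (1 - P) *ᵥ H n = B := by
    intro n
    induction n with
    | zero => rw [hF0, hH0, Matrix.mulVec_zero, add_zero]
    | succ n ih =>
      rw [hF n, hH n, Matrix.mulVec_add, Matrix.add_mulVec, Matrix.sub_mulVec,
        Matrix.one_mulVec, ← Matrix.mulVec_mulVec]
      rw [show (1 - P) *ᵥ (Matrix.single (ι n) (ι n) 1 *ᵥ F n)
          = Matrix.single (ι n) (ι n) 1 *ᵥ F n - P *ᵥ (Matrix.single (ι n) (ι n) 1 *ᵥ F n) by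
        rw [Matrix.sub_mulVec, Matrix.one_mulVec]]
      rw [← ih]
      abel
  -- H n = Q *ᵥ (B - F n)
  have hHQ : ∀ n, H n = Q *ᵥ (B - F n) := by
    intro n
    have h1 : (1 - P) *ᵥ H n = B - F n := by
      have := hinv n
      funext j
      have h2 := congrFun this j
      simp only [Pi.add_apply] at h2
      simp only [Pi.sub_apply]
      linarith
    calc H n = (1 : Matrix (Fin N) (Fin N) ℝ) *ᵥ H n := (Matrix.one_mulVec _).symm
      _ = (Q * (1 - P)) *ᵥ H n := by rw [hQr]
      _ = Q *ᵥ ((1 - P) *ᵥ H n) := (Matrix.mulVec_mulVec _ _ _).symm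
      _ = Q *ᵥ (B - F n) := by rw [h1]
  -- H monotone and bounded
  have hmono : ∀ n j, H n j ≤ H (n+1) j := by
    intro n j
    rw [hH n]
    simp only [Pi.add_apply]
    rw [hJvec]
    have : 0 ≤ (if j = ι n then F n (ι n) else 0) := by
      split <;> [exact hFpos n (ι n); rfl]
    linarith
  have hbdd : ∀ n j, H n j ≤ X j := by
    intro n j
    rw [hHQ n, Matrix.mulVec_sub]
    simp only [Pi.sub_apply]
    have h1 : 0 ≤ (Q *ᵥ F n) j := by
      rw [Matrix.mulVec]
      exact Finset.sum_nonneg fun k _ => mul_nonneg (hQpos j k) (hFpos n k)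
    have : (Q *ᵥ B) j = X j := rfl
    linarith
  -- limit of H
  set L : Fin N → ℝ := fun j => ⨆ n, H n j with hLdef
  have hL : ∀ j, Tendsto (fun n => H n j) atTop (𝓝 (L j)) := by
    intro j
    apply tendsto_atTop_ciSup
    · exact monotone_nat_of_le_succ fun n => hmono n j
    · exact ⟨X j, fun x ⟨n, hn⟩ => hn ▸ hbdd n j⟩
  -- limit of F
  set G : Fin N → ℝ := fun j => B j - (L j - ∑ k, P j k * L k) with hGdef
  have hFcoord2 : ∀ n j, F n j = B j - (H n j - ∑ k, P j k * H n k) := by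
    intro n j
    have h1 := congrFun (hinv n) j
    simp only [Pi.add_apply] at h1
    have h2 : ((1 - P) *ᵥ H n) j = H n j - ∑ k, P j k * H n k := by
      rw [Matrix.sub_mulVec, Matrix.one_mulVec]
      simp [Matrix.mulVec, dotProduct]
    rw [h2] at h1
    linarith
  have hFG : ∀ j, Tendsto (fun n => F n j) atTop (𝓝 (G j)) := by
    intro j
    simp_rw [hFcoord2]
    apply tendsto_const_nhds.sub
    apply (hL j).sub
    apply tendsto_finset_sum
    intro k _
    exact tendsto_const_nhds.mul (hL k)
  -- fairness kills G
  have hGzero : ∀ i, G i = 0 := by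
    intro i
    have hfreq : ∃ᶠ n in atTop, ι n = i := frequently_atTop.2 (fun m => hfair i m)
    obtain ⟨φ, hφmono, hφι⟩ := Filter.extraction_of_frequently_atTop hfreq
    have hφtop : Tendsto φ atTop atTop := hφmono.tendsto_atTop
    have h1 : Tendsto (fun k => F (φ k) i) atTop (𝓝 (G i)) := (hFG i).comp hφtop
    have h2 : ∀ k, F (φ k) i = H (φ k + 1) i - H (φ k) i := by
      intro k
      rw [hH (φ k)]
      simp only [Pi.add_apply]
      rw [hJvec]
      rw [hφι k]
      simp
    have h3 : Tendsto (fun k => H (φ k + 1) i - H (φ k) i) atTop (𝓝 (L i - L i)) := by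
      apply Tendsto.sub
      · exact (hL i).comp (tendsto_atTop_mono (fun k => Nat.le_succ (φ k)) hφtop)
      · exact (hL i).comp hφtop
    rw [sub_self] at h3
    simp_rw [h2] at h1
    exact tendsto_nhds_unique h1 h3
  -- conclude
  have hLsol : L = P *ᵥ L + B := by
    funext j
    have := hGzero j
    rw [hGdef] at this
    simp only at this
    have hPL : (P *ᵥ L) j = ∑ k, P j k * L k := by
      simp [Matrix.mulVec, dotProduct]
    simp only [Pi.add_apply, hPL]
    linarith
  have hLX : L = X := huniq L hLsol
  refine ⟨X, hXsol, huniq, ?_, ?_⟩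
  · rw [tendsto_pi_nhds]
    intro j
    rw [← hLX]
    exact hL j
  · rw [tendsto_pi_nhds]
    intro j
    have := hFG j
    rw [hGzero j] at this
    simpa using this
end

section
/- Superposition: if ρ(P) < 1, ∑_n |G_n| < ∞ with S = ∑_n G_n, and I is a fair sequence, then the D-iteration with added fluids converges and H(P, B, I, G) = H(P, B+S, I) = (I−P)^{−1}(B+S). -/
open Matrix BigOperators Filter Topology
open scoped ENNReal NNReal

attribute [local instance] Matrix.linftyOpNormedRing Matrix.linftyOpNormedAlgebra

lemma aux_pow_norm_tendsto_zero {N : ℕ} [NeZero N] (Q : Matrix (Fin N) (Fin N) ℂ)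
    (hρ : ∀ μ ∈ spectrum ℂ Q, ‖μ‖ < 1) :
    Tendsto (fun k : ℕ => ‖Q ^ k‖) atTop (𝓝 0) := by
  haveI : CompleteSpace (Matrix (Fin N) (Fin N) ℂ) :=
    inferInstanceAs (CompleteSpace (Fin N → Fin N → ℂ))
  have hrad : spectralRadius ℂ Q < 1 := by
    refine spectrum.spectralRadius_lt_of_forall_lt Q ?_
    intro z hz
    exact_mod_cast hρ z hz
  obtain ⟨r, hr1, hr2⟩ := ENNReal.lt_iff_exists_nnreal_btwn.mp hrad
  have hr2' : r < 1 := by exact_mod_cast hr2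
  have hgel := spectrum.pow_nnnorm_pow_one_div_tendsto_nhds_spectralRadius Q
  have hev : ∀ᶠ n : ℕ in atTop, (‖Q ^ n‖₊ : ℝ≥0∞) ^ (1 / (n : ℝ)) < (r : ℝ≥0∞) :=
    hgel.eventually_lt_const hr1
  have hev2 : ∀ᶠ n : ℕ in atTop, ‖Q ^ n‖ ≤ (r : ℝ) ^ n := by
    filter_upwards [hev, eventually_ge_atTop 1] with n hn hn1
    have hne : (n : ℝ) ≠ 0 := by positivity
    have := ENNReal.rpow_le_rpow hn.le (by positivity : (0:ℝ) ≤ (n : ℝ))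
    rw [← ENNReal.rpow_mul, one_div, inv_mul_cancel₀ hne, ENNReal.rpow_one] at this
    have : (‖Q ^ n‖₊ : ℝ≥0∞) ≤ ((r ^ (n : ℝ) : ℝ≥0) : ℝ≥0∞) := by
      rwa [ENNReal.coe_rpow_of_nonneg _ (by positivity)]
    have h2 : ‖Q ^ n‖₊ ≤ r ^ (n : ℝ) := by exact_mod_cast this
    calc ‖Q ^ n‖ = ((‖Q ^ n‖₊ : ℝ≥0) : ℝ) := rfl
      _ ≤ ((r ^ (n : ℝ) : ℝ≥0) : ℝ) := by exact_mod_cast h2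
      _ = (r : ℝ) ^ (n : ℝ) := NNReal.coe_rpow _ _
      _ = (r : ℝ) ^ n := by rw [Real.rpow_natCast]
  have hgeo : Tendsto (fun n : ℕ => (r : ℝ) ^ n) atTop (𝓝 0) :=
    tendsto_pow_atTop_nhds_zero_of_lt_one r.coe_nonneg hr2'
  refine squeeze_zero' (Eventually.of_forall fun n => norm_nonneg _) hev2 hgeo

lemma aux_spectrum_transpose {N : ℕ} (Q : Matrix (Fin N) (Fin N) ℂ) :
    spectrum ℂ Qᵀ = spectrum ℂ Q := by
  ext μ
  simp only [spectrum.mem_iff, not_iff_not]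
  have h : algebraMap ℂ (Matrix (Fin N) (Fin N) ℂ) μ - Qᵀ =
      (algebraMap ℂ (Matrix (Fin N) (Fin N) ℂ) μ - Q)ᵀ := by
    rw [transpose_sub, Matrix.algebraMap_eq_diagonal, diagonal_transpose]
  rw [h, Matrix.isUnit_iff_isUnit_det, Matrix.det_transpose, ← Matrix.isUnit_iff_isUnit_det]

lemma aux_det_unit {N : ℕ} (P : Matrix (Fin N) (Fin N) ℝ)
    (hρ : ∀ μ ∈ spectrum ℂ (P.map (algebraMap ℝ ℂ)), ‖μ‖ < 1) :
    IsUnit (1 - P).det := by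
  have h1 : (1 : ℂ) ∉ spectrum ℂ (P.map (algebraMap ℝ ℂ)) := by
    intro h
    simpa using hρ 1 h
  rw [spectrum.notMem_iff, _root_.map_one] at h1
  have heq : (1 : Matrix (Fin N) (Fin N) ℂ) - P.map (algebraMap ℝ ℂ) =
      ((1 - P).map (algebraMap ℝ ℂ)) := by
    ext i j
    by_cases h : i = j <;> simp [Matrix.map_apply, Matrix.one_apply, Matrix.sub_apply, h]
  rw [heq, Matrix.isUnit_iff_isUnit_det] at h1
  have h2 : IsUnit ((algebraMap ℝ ℂ) (1 - P).det) := by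
    rw [RingHom.map_det, RingHom.mapMatrix_apply]; exact h1
  rw [isUnit_iff_ne_zero]
  intro h0
  rw [h0, map_zero] at h2
  exact h2.ne_zero rfl

lemma aux_pow_entry_nonneg {N : ℕ} (P : Matrix (Fin N) (Fin N) ℝ)
    (hPpos : ∀ i j, 0 ≤ P i j) : ∀ k i j, 0 ≤ (P ^ k) i j := by
  intro k
  induction k with
  | zero => intro i j; by_cases h : i = j <;> simp [Matrix.one_apply, h]
  | succ k ih =>
    intro i j
    rw [pow_succ, Matrix.mul_apply]
    exact Finset.sum_nonneg fun l _ => mul_nonneg (ih i l) (hPpos l j)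

lemma aux_column_sums {N : ℕ} [NeZero N] (P : Matrix (Fin N) (Fin N) ℝ)
    (hPpos : ∀ i j, 0 ≤ P i j)
    (hρ : ∀ μ ∈ spectrum ℂ (P.map (algebraMap ℝ ℂ)), ‖μ‖ < 1) :
    ∃ K, 1 ≤ K ∧ ∀ i, ∑ j, (P ^ K) j i ≤ 1 / 2 := by
  set Q := P.map (algebraMap ℝ ℂ) with hQ
  have hρT : ∀ μ ∈ spectrum ℂ Qᵀ, ‖μ‖ < 1 := by
    rw [aux_spectrum_transpose]; exact hρ
  have hnorm := aux_pow_norm_tendsto_zero Qᵀ hρT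
  have hev : ∀ᶠ k : ℕ in atTop, ‖Qᵀ ^ k‖ < 1 / 2 := by
    have := hnorm.eventually_lt_const (by norm_num : (0:ℝ) < 1/2)
    simpa using this
  obtain ⟨K0, hK0⟩ := eventually_atTop.mp hev
  refine ⟨max K0 1, le_max_right _ _, fun i => ?_⟩
  set K := max K0 1
  have hKnorm : ‖Qᵀ ^ K‖ < 1 / 2 := hK0 K (le_max_left _ _)
  have hentry : ∀ a b, (Qᵀ ^ K) a b = ((algebraMap ℝ ℂ) ((P ^ K) b a)) := by
    intro a b
    rw [← Matrix.transpose_pow]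
    have : Q ^ K = (P ^ K).map (algebraMap ℝ ℂ) := by
      rw [hQ, ← RingHom.mapMatrix_apply, ← RingHom.mapMatrix_apply, ← map_pow]
    rw [Matrix.transpose_apply, this, Matrix.map_apply]
  have hb : ∑ j, ‖(Qᵀ ^ K) i j‖₊ ≤ ‖Qᵀ ^ K‖₊ := by
    rw [Matrix.linfty_opNNNorm_def]
    exact Finset.le_sup (f := fun a => ∑ j, ‖(Qᵀ ^ K) a j‖₊) (Finset.mem_univ i)
  have hb' : ∑ j, ‖(Qᵀ ^ K) i j‖ ≤ ‖Qᵀ ^ K‖ := by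
    have := NNReal.coe_le_coe.mpr hb
    simpa [NNReal.coe_sum, coe_nnnorm] using this
  have heq : ∑ j, ‖(Qᵀ ^ K) i j‖ = ∑ j, (P ^ K) j i := by
    refine Finset.sum_congr rfl fun j _ => ?_
    rw [hentry]
    simp only [Complex.coe_algebraMap, Complex.norm_real]
    exact abs_of_nonneg (aux_pow_entry_nonneg P hPpos K j i)
  linarith [heq ▸ hb', hKnorm]

set_option maxHeartbeats 1600000 in
/-- superposition: if `ρ(P) < 1`, the added fluids are absolutely summable
with sum `S`, and the sequence is fair, then the D-iteration with added fluids converges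
to `H(P, B+S, I) = (I-P)⁻¹ (B+S)`. -/
theorem diteration_superposition {N : ℕ} (P : Matrix (Fin N) (Fin N) ℝ)
    (B : Fin N → ℝ) (G : ℕ → Fin N → ℝ)
    (hPpos : ∀ i j, 0 ≤ P i j)
    (hρ : ∀ μ ∈ spectrum ℂ (P.map (algebraMap ℝ ℂ)), ‖μ‖ < 1)
    (hG : Summable fun n => ∑ i, |G n i|)
    (ι : ℕ → Fin N) (hfair : ∀ i : Fin N, ∀ m : ℕ, ∃ n ≥ m, ι n = i)
    (F H : ℕ → Fin N → ℝ) (hF0 : F 0 = B) (hH0 : H 0 = 0)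
    (hF : ∀ n, F (n + 1) =
      (1 - Matrix.single (ι n) (ι n) 1 + P * Matrix.single (ι n) (ι n) 1) *ᵥ (F n + G n))
    (hH : ∀ n, H (n + 1) = H n + Matrix.single (ι n) (ι n) 1 *ᵥ (F n + G n)) :
    Tendsto H atTop (𝓝 ((1 - P)⁻¹ *ᵥ (B + ∑' n, G n))) := by
  classical
  rcases Nat.eq_zero_or_pos N with hN | hN
  · subst hN
    have hs : H = fun _ => (1 - P)⁻¹ *ᵥ (B + ∑' n, G n) :=
      funext fun n => Subsingleton.elim _ _
    rw [hs]; exact tendsto_const_nhds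
  haveI : NeZero N := ⟨hN.ne'⟩
  set v : ℕ → Fin N → ℝ := fun n => F n + G n with hv
  set c : ℕ → ℝ := fun n => |v n (ι n)| with hc
  -- componentwise summability of G
  have hGabs : ∀ i, Summable fun n => |G n i| := by
    intro i
    refine hG.of_nonneg_of_le (fun n => abs_nonneg _) fun n => ?_
    exact Finset.single_le_sum (f := fun i => |G n i|) (fun j _ => abs_nonneg _)
      (Finset.mem_univ i)
  have hGsum : ∀ i, Summable fun n => G n i := fun i => (hGabs i).of_abs
  -- action of the basis matrix
  have hEmul : ∀ (i : Fin N) (x : Fin N → ℝ),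
      (Matrix.single i i (1:ℝ)) *ᵥ x = fun j => if j = i then x i else 0 := by
    intro i x
    funext j
    simp only [Matrix.mulVec, dotProduct, Matrix.single, Matrix.of_apply, ite_and,
      boole_mul]
    by_cases h : j = i
    · subst h; simp
    · simp [Ne.symm h, h]
  -- componentwise recurrence
  have hFcomp : ∀ n j, F (n+1) j =
      (v n j - (if j = ι n then v n (ι n) else 0)) + P j (ι n) * v n (ι n) := by
    intro n j
    rw [hF n, Matrix.add_mulVec, Matrix.sub_mulVec, Matrix.one_mulVec, ← Matrix.mulVec_mulVec,
      hEmul]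
    have h2 : (P *ᵥ fun k => if k = ι n then F n (ι n) + G n (ι n) else 0) j
        = P j (ι n) * (F n (ι n) + G n (ι n)) := by
      simp only [Matrix.mulVec, dotProduct, mul_ite, mul_zero]
      simp [Finset.sum_ite_eq]
    simp only [Pi.add_apply, Pi.sub_apply]
    rw [h2]
    simp [hv]
  -- vector form of recurrence
  have hFvec : ∀ n, F (n+1) = v n - Matrix.single (ι n) (ι n) 1 *ᵥ v n
      + P *ᵥ (Matrix.single (ι n) (ι n) 1 *ᵥ v n) := by
    intro n
    rw [hF n, Matrix.add_mulVec, Matrix.sub_mulVec, Matrix.one_mulVec, ← Matrix.mulVec_mulVec]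
  -- weights
  obtain ⟨K, hK1, hKcol⟩ := aux_column_sums P hPpos hρ
  set u : ℕ → Fin N → ℝ := fun k => (fun _ => (1:ℝ)) ᵥ* P ^ k with hu
  set w : Fin N → ℝ := fun i => ∑ k ∈ Finset.range K, u k i with hw
  have huapp : ∀ k i, u k i = ∑ j, (P ^ k) j i := by
    intro k i
    simp [hu, Matrix.vecMul, dotProduct]
  have hu_nonneg : ∀ k i, 0 ≤ u k i := by
    intro k i
    rw [huapp]
    exact Finset.sum_nonneg fun j _ => aux_pow_entry_nonneg P hPpos k j i
  have hu0 : ∀ i, u 0 i = 1 := by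
    intro i
    simp [hu, Matrix.vecMul_one]
  have hw1 : ∀ i, 1 ≤ w i := by
    intro i
    have h := Finset.single_le_sum (f := fun k => u k i) (fun k _ => hu_nonneg k i)
      (Finset.mem_range.mpr (by omega : 0 < K))
    have h' : u 0 i ≤ ∑ k ∈ Finset.range K, u k i := h
    rw [hu0 i] at h'
    simpa [hw] using h'
  have hw0 : ∀ i, 0 ≤ w i := fun i => le_trans zero_le_one (hw1 i)
  have husucc : ∀ k i, ∑ j, u k j * P j i = u (k+1) i := by
    intro k i
    have h : u k ᵥ* P = u (k+1) := by
      rw [hu]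
      simp only []
      rw [Matrix.vecMul_vecMul, ← pow_succ]
    calc ∑ j, u k j * P j i = (u k ᵥ* P) i := by
          simp [Matrix.vecMul, dotProduct]
      _ = u (k+1) i := by rw [h]
  have hwP : ∀ i, ∑ j, w j * P j i ≤ w i - 1/2 := by
    intro i
    have h1 : ∑ j, w j * P j i = ∑ k ∈ Finset.range K, u (k+1) i := by
      calc ∑ j, w j * P j i = ∑ j, ∑ k ∈ Finset.range K, u k j * P j i := by
            refine Finset.sum_congr rfl fun j _ => ?_
            rw [hw, Finset.sum_mul]
        _ = ∑ k ∈ Finset.range K, ∑ j, u k j * P j i := Finset.sum_comm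
        _ = ∑ k ∈ Finset.range K, u (k+1) i :=
            Finset.sum_congr rfl fun k _ => husucc k i
    have h2 : ∑ k ∈ Finset.range K, u (k+1) i = w i + u K i - u 0 i := by
      have := Finset.sum_range_succ' (fun k => u k i) K
      have h3 := Finset.sum_range_succ (fun k => u k i) K
      rw [hw]
      simp only [] at this h3 ⊢
      linarith [this, h3]
    have h4 : u K i ≤ 1/2 := by rw [huapp]; exact hKcol i
    rw [h1, h2, hu0 i]
    linarith
  -- the step inequality
  have hstep : ∀ n, (∑ i, w i * |F (n+1) i|) + (1/2) * c n
      ≤ (∑ i, w i * |F n i|) + ∑ i, w i * |G n i| := by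
    intro n
    have h1 : ∀ i, w i * |F (n+1) i| ≤
        w i * |v n i| - (if i = ι n then w (ι n) * |v n (ι n)| else 0)
          + w i * P i (ι n) * |v n (ι n)| := by
      intro i
      rw [hFcomp n i]
      by_cases h : i = ι n
      · rw [h]
        simp only [eq_self_iff_true, if_true]
        rw [sub_self, zero_add, abs_mul, abs_of_nonneg (hPpos (ι n) (ι n))]
        exact le_of_eq (by ring)
      · simp only [if_neg h]
        have habs : |v n i - 0 + P i (ι n) * v n (ι n)| ≤ |v n i| + P i (ι n) * |v n (ι n)| := by
          rw [sub_zero]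
          refine (abs_add_le _ _).trans ?_
          rw [abs_mul, abs_of_nonneg (hPpos i (ι n))]
        have hm := mul_le_mul_of_nonneg_left habs (hw0 i)
        calc w i * |v n i - 0 + P i (ι n) * v n (ι n)|
            ≤ w i * (|v n i| + P i (ι n) * |v n (ι n)|) := hm
          _ = w i * |v n i| - 0 + w i * P i (ι n) * |v n (ι n)| := by ring
    have h2 : ∑ i, w i * |F (n+1) i| ≤
        (∑ i, w i * |v n i|) - w (ι n) * |v n (ι n)|
          + (∑ i, w i * P i (ι n)) * |v n (ι n)| := by
      calc ∑ i, w i * |F (n+1) i|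
          ≤ ∑ i, (w i * |v n i| - (if i = ι n then w (ι n) * |v n (ι n)| else 0)
              + w i * P i (ι n) * |v n (ι n)|) := Finset.sum_le_sum fun i _ => h1 i
        _ = (∑ i, w i * |v n i|) - w (ι n) * |v n (ι n)|
              + (∑ i, w i * P i (ι n)) * |v n (ι n)| := by
            rw [Finset.sum_add_distrib, Finset.sum_sub_distrib, Finset.sum_ite_eq'
              Finset.univ (ι n) (fun _ => w (ι n) * |v n (ι n)|), ← Finset.sum_mul]
            simp
    have h3 : (∑ i, w i * P i (ι n)) * |v n (ι n)| ≤ (w (ι n) - 1/2) * |v n (ι n)| :=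
      mul_le_mul_of_nonneg_right (hwP (ι n)) (abs_nonneg _)
    have h4 : ∑ i, w i * |v n i| ≤ (∑ i, w i * |F n i|) + ∑ i, w i * |G n i| := by
      rw [← Finset.sum_add_distrib]
      refine Finset.sum_le_sum fun i _ => ?_
      have habs : |v n i| ≤ |F n i| + |G n i| := by
        simp only [hv, Pi.add_apply]
        exact abs_add_le _ _
      have := mul_le_mul_of_nonneg_left habs (hw0 i)
      linarith [this]
    have hcn : c n = |v n (ι n)| := rfl
    rw [hcn]
    linarith
  -- summed inequality, summability of c
  have hLbound : ∀ M, (∑ i, w i * |F M i|) + (1/2) * (∑ n ∈ Finset.range M, c n)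
      ≤ (∑ i, w i * |F 0 i|) + ∑ n ∈ Finset.range M, ∑ i, w i * |G n i| := by
    intro M
    induction M with
    | zero => simp
    | succ M ih =>
      rw [Finset.sum_range_succ, Finset.sum_range_succ]
      have := hstep M
      linarith
  have hgsummable : Summable (fun n => ∑ i, w i * |G n i|) := by
    refine Summable.of_nonneg_of_le
      (fun n => Finset.sum_nonneg fun i _ => mul_nonneg (hw0 i) (abs_nonneg _))
      (fun n => ?_) (hG.mul_left (∑ i, w i))
    calc ∑ i, w i * |G n i| ≤ ∑ i, w i * (∑ j, |G n j|) :=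
        Finset.sum_le_sum fun i _ => mul_le_mul_of_nonneg_left
          (Finset.single_le_sum (f := fun j => |G n j|) (fun j _ => abs_nonneg _)
            (Finset.mem_univ i)) (hw0 i)
      _ = (∑ i, w i) * ∑ j, |G n j| := (Finset.sum_mul _ _ _).symm
  have hcsummable : Summable c := by
    refine summable_of_sum_range_le (c := 2 * ((∑ i, w i * |F 0 i|)
      + ∑' n, ∑ i, w i * |G n i|)) (fun n => abs_nonneg _) (fun M => ?_)
    have h1 := hLbound M
    have h2 : ∑ n ∈ Finset.range M, ∑ i, w i * |G n i| ≤ ∑' n, ∑ i, w i * |G n i| :=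
      Summable.sum_le_tsum (Finset.range M)
        (fun n _ => Finset.sum_nonneg fun i _ => mul_nonneg (hw0 i) (abs_nonneg _)) hgsummable
    have h3 : 0 ≤ ∑ i, w i * |F M i| :=
      Finset.sum_nonneg fun i _ => mul_nonneg (hw0 i) (abs_nonneg _)
    linarith
  have hczero : Tendsto c atTop (𝓝 0) := hcsummable.tendsto_atTop_zero
  -- componentwise convergence of F to 0
  have hFlim : ∀ j, Tendsto (fun n => F n j) atTop (𝓝 0) := by
    intro j
    set Pm : ℝ := ∑ a, ∑ b, P a b with hPmdef
    have hPm0 : 0 ≤ Pm :=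
      Finset.sum_nonneg fun a _ => Finset.sum_nonneg fun b _ => hPpos a b
    have hPmB : ∀ a b, P a b ≤ Pm := by
      intro a b
      calc P a b ≤ ∑ b', P a b' :=
          Finset.single_le_sum (f := fun b' => P a b') (fun _ _ => hPpos a _) (Finset.mem_univ b)
        _ ≤ Pm := Finset.single_le_sum (f := fun a' => ∑ b', P a' b')
            (fun a' _ => Finset.sum_nonneg fun _ _ => hPpos _ _) (Finset.mem_univ a)
    have hd : Summable (fun n => F (n+1) j - F n j) := by
      refine Summable.of_norm_bounded (g := fun n => |G n j| + (1 + Pm) * c n)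
        ((hGabs j).add (hcsummable.mul_left _)) (fun n => ?_)
      rw [Real.norm_eq_abs, hFcomp n j]
      have hexp : v n j - (if j = ι n then v n (ι n) else 0) + P j (ι n) * v n (ι n) - F n j
          = G n j - (if j = ι n then v n (ι n) else 0) + P j (ι n) * v n (ι n) := by
        simp only [hv, Pi.add_apply]
        ring
      rw [hexp]
      have t1 : |if j = ι n then v n (ι n) else 0| ≤ c n := by
        by_cases h : j = ι n <;> simp [h, hc, abs_nonneg]
      have t2 : |P j (ι n) * v n (ι n)| ≤ Pm * c n := by
        rw [abs_mul, abs_of_nonneg (hPpos _ _)]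
        exact mul_le_mul (hPmB _ _) le_rfl (abs_nonneg _) hPm0
      have t3 : |G n j - (if j = ι n then v n (ι n) else 0) + P j (ι n) * v n (ι n)|
          ≤ |G n j - (if j = ι n then v n (ι n) else 0)| + |P j (ι n) * v n (ι n)| :=
        abs_add_le _ _
      have t4 : |G n j - (if j = ι n then v n (ι n) else 0)|
          ≤ |G n j| + |if j = ι n then v n (ι n) else 0| := by
        rw [sub_eq_add_neg]
        exact (abs_add_le _ _).trans (le_of_eq (by rw [abs_neg]))
      show _ ≤ |G n j| + (1 + Pm) * c n
      linarith
    have hdef : ∀ n, F n j = F 0 j + ∑ k ∈ Finset.range n, (F (k+1) j - F k j) := by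
      intro n
      rw [Finset.sum_range_sub (fun k => F k j)]
      ring
    have hconv : Tendsto (fun n => F n j) atTop
        (𝓝 (F 0 j + ∑' k, (F (k+1) j - F k j))) := by
      have h := (hd.hasSum.tendsto_sum_nat).const_add (F 0 j)
      exact h.congr fun n => (hdef n).symm
    obtain ⟨φ, hφ1, hφ2⟩ : ∃ φ : ℕ → ℕ, (∀ m, m ≤ φ m) ∧ ∀ m, ι (φ m) = j := by
      choose φ h1 h2 using hfair j
      exact ⟨φ, h1, h2⟩
    have hφtop : Tendsto φ atTop atTop := tendsto_atTop_mono hφ1 tendsto_id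
    have hsub : Tendsto (fun m => F (φ m + 1) j) atTop
        (𝓝 (F 0 j + ∑' k, (F (k+1) j - F k j))) :=
      hconv.comp (tendsto_atTop_mono (fun m => (hφ1 m).trans (Nat.le_succ _)) tendsto_id)
    have hsub0 : Tendsto (fun m => F (φ m + 1) j) atTop (𝓝 0) := by
      have hb : ∀ m, ‖F (φ m + 1) j‖ ≤ Pm * c (φ m) := by
        intro m
        rw [Real.norm_eq_abs, hFcomp (φ m) j, hφ2 m]
        simp only [eq_self_iff_true, if_true]
        have hcv : c (φ m) = |v (φ m) j| := by rw [hc]; simp only [hφ2 m]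
        rw [sub_self, zero_add, abs_mul, abs_of_nonneg (hPpos j j), hcv]
        exact mul_le_mul_of_nonneg_right (hPmB j j) (abs_nonneg _)
      have hlim : Tendsto (fun m => Pm * c (φ m)) atTop (𝓝 0) := by
        have := (hczero.comp hφtop).const_mul Pm
        simpa using this
      exact squeeze_zero_norm hb hlim
    have hzero : F 0 j + ∑' k, (F (k+1) j - F k j) = 0 := tendsto_nhds_unique hsub hsub0
    rwa [hzero] at hconv
  -- the invariant
  have hinv : ∀ n, H n + F n = P *ᵥ H n + B + ∑ k ∈ Finset.range n, G k := by
    intro n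
    induction n with
    | zero => simp [hH0, hF0, Matrix.mulVec_zero]
    | succ n ih =>
      rw [hH n, hFvec n, Finset.sum_range_succ,
        Matrix.mulVec_add P (H n) (Matrix.single (ι n) (ι n) 1 *ᵥ v n)]
      funext i
      have ihi := congrFun ih i
      simp only [Pi.add_apply, Pi.sub_apply, hv] at ihi ⊢
      linarith
  -- conclusion
  have hdet : IsUnit (1 - P).det := aux_det_unit P hρ
  have hid : ∀ n, H n = (1 - P)⁻¹ *ᵥ ((1 - P) *ᵥ H n) := by
    intro n
    rw [Matrix.mulVec_mulVec, Matrix.nonsing_inv_mul _ hdet, Matrix.one_mulVec]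
  have hAH : ∀ n, (1 - P) *ᵥ H n = B + (∑ k ∈ Finset.range n, G k) - F n := by
    intro n
    rw [Matrix.sub_mulVec, Matrix.one_mulVec]
    funext i
    have h := congrFun (hinv n) i
    simp only [Pi.add_apply, Pi.sub_apply] at h ⊢
    linarith
  have hGsummable : Summable G := Pi.summable.mpr hGsum
  have hSlim : ∀ i, Tendsto (fun n => ∑ k ∈ Finset.range n, G k i) atTop
      (𝓝 ((∑' n, G n) i)) := by
    intro i
    have h1 : (∑' n, G n) i = ∑' n, G n i := tsum_apply hGsummable
    rw [h1]
    exact (hGsum i).hasSum.tendsto_sum_nat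
  rw [tendsto_pi_nhds]
  intro i
  have hHi : ∀ n, H n i = ∑ j, (1 - P)⁻¹ i j
      * (B j + (∑ k ∈ Finset.range n, G k j) - F n j) := by
    intro n
    conv_lhs => rw [hid n]
    rw [hAH n]
    simp only [Matrix.mulVec, dotProduct, Pi.add_apply, Pi.sub_apply, Finset.sum_apply]
  have htarget : ((1 - P)⁻¹ *ᵥ (B + ∑' n, G n)) i
      = ∑ j, (1 - P)⁻¹ i j * (B j + (∑' n, G n) j) := by
    simp only [Matrix.mulVec, dotProduct, Pi.add_apply]
  simp only [hHi]
  rw [htarget]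
  refine tendsto_finset_sum _ fun j _ => ?_
  refine Tendsto.const_mul _ ?_
  have h := Tendsto.sub (Tendsto.const_add (B j) (hSlim j)) (hFlim j)
  simpa using h
end

section
/- Monotonicity in added fluids: if G_n ≤ G_n' entrywise for all n, B ≥ 0, P ≥ 0, and all G_n, G_n' ≥ 0, then for all n, F_n ≤ F_n' and H_n(P,B,I,G) ≤ H_n(P,B,I,G') entrywise, for the same sequence I. -/
open Matrix BigOperators

lemma mulVec_mono {N : ℕ} (M : Matrix (Fin N) (Fin N) ℝ) (hM : ∀ i j, 0 ≤ M i j)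
    (v w : Fin N → ℝ) (hvw : ∀ i, v i ≤ w i) (i : Fin N) :
    (M *ᵥ v) i ≤ (M *ᵥ w) i := by
  simp only [mulVec, dotProduct]
  exact Finset.sum_le_sum fun j _ => mul_le_mul_of_nonneg_left (hvw j) (hM i j)

lemma iter_mat_nonneg {N : ℕ} (P : Matrix (Fin N) (Fin N) ℝ)
    (hPpos : ∀ i j, 0 ≤ P i j) (k : Fin N) (i j : Fin N) :
    0 ≤ (1 - Matrix.single k k 1 + P * Matrix.single k k 1 : Matrix (Fin N) (Fin N) ℝ) i j := by
  rcases eq_or_ne j k with rfl | hj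
  · rw [Matrix.add_apply, Matrix.sub_apply, Matrix.one_apply,
      Matrix.mul_single_apply_same, mul_one]
    have := hPpos i j
    rcases eq_or_ne i j with rfl | hi
    · rw [Matrix.single_apply_same, if_pos rfl]; linarith
    · rw [Matrix.single_apply_of_ne j j 1 i j (by tauto), if_neg hi]; linarith
  · rw [Matrix.add_apply, Matrix.sub_apply, Matrix.one_apply,
      Matrix.mul_single_apply_of_ne 1 k k i j hj,
      Matrix.single_apply_of_ne k k 1 i j (by tauto)]
    split_ifs <;> norm_num

/-- monotonicity in the added fluids: if `0 ≤ G_n ≤ G_n'`, `B ≥ 0`, `P ≥ 0`,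
then `F_n ≤ F_n'` and `H_n ≤ H_n'` entrywise for all `n`. -/
theorem diteration_fluids_monotone {N : ℕ} (P : Matrix (Fin N) (Fin N) ℝ)
    (B : Fin N → ℝ) (G G' : ℕ → Fin N → ℝ)
    (hPpos : ∀ i j, 0 ≤ P i j) (hB : ∀ i, 0 ≤ B i)
    (hGpos : ∀ n i, 0 ≤ G n i) (hG'pos : ∀ n i, 0 ≤ G' n i)
    (hGG' : ∀ n i, G n i ≤ G' n i)
    (ι : ℕ → Fin N) (F F' H H' : ℕ → Fin N → ℝ)
    (hF0 : F 0 = B) (hF'0 : F' 0 = B) (hH0 : H 0 = 0) (hH'0 : H' 0 = 0)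
    (hF : ∀ n, F (n + 1) =
      (1 - Matrix.single (ι n) (ι n) 1 + P * Matrix.single (ι n) (ι n) 1) *ᵥ (F n + G n))
    (hF' : ∀ n, F' (n + 1) =
      (1 - Matrix.single (ι n) (ι n) 1 + P * Matrix.single (ι n) (ι n) 1) *ᵥ (F' n + G' n))
    (hH : ∀ n, H (n + 1) = H n + Matrix.single (ι n) (ι n) 1 *ᵥ (F n + G n))
    (hH' : ∀ n, H' (n + 1) = H' n + Matrix.single (ι n) (ι n) 1 *ᵥ (F' n + G' n)) :
    ∀ n i, F n i ≤ F' n i ∧ H n i ≤ H' n i := by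
  intro n
  induction n with
  | zero => intro i; rw [hF0, hF'0, hH0, hH'0]; exact ⟨le_refl _, le_refl _⟩
  | succ n ih =>
    have hsum : ∀ i, (F n + G n) i ≤ (F' n + G' n) i := fun i =>
      add_le_add (ih i).1 (hGG' n i)
    intro i
    constructor
    · rw [hF, hF']
      exact mulVec_mono _ (iter_mat_nonneg P hPpos (ι n)) _ _ hsum i
    · rw [hH, hH']
      refine add_le_add (ih i).2 (mulVec_mono _ ?_ _ _ hsum i)
      intro a b
      simp only [Matrix.single, of_apply]
      split_ifs <;> norm_num
end

section
/- Generalized diffusion identity: for the partial diffusion scheme F_n = P^{α_n}_{i_n} F_{n−1}, H_n = H_{n−1} + α_n J_{i_n} F_{n−1} with F_0 = B, H_0 = 0, one has H_n + F_n = P·H_n + B for all n. -/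
open Matrix BigOperators

/-- generalized (partial) diffusion identity: for
`F_n = P^{α_n}_{i_n} F_{n-1}`, `H_n = H_{n-1} + α_n J_{i_n} F_{n-1}`, one has
`H_n + F_n = P·H_n + B` for all `n`, where `P^α_i = I + α(P-I)J_i`. -/
theorem partial_diffusion_identity {N : ℕ} (P : Matrix (Fin N) (Fin N) ℝ)
    (B : Fin N → ℝ) (α : ℕ → ℝ) (hα : ∀ n, 0 ≤ α n)
    (ι : ℕ → Fin N) (F H : ℕ → Fin N → ℝ)
    (hF0 : F 0 = B) (hH0 : H 0 = 0)
    (hF : ∀ n, F (n + 1) =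
      (1 + α n • ((P - 1) * single (ι n) (ι n) 1)) *ᵥ F n)
    (hH : ∀ n, H (n + 1) = H n + α n • (single (ι n) (ι n) 1 *ᵥ F n)) :
    ∀ n, H n + F n = P *ᵥ H n + B := by
  intro n
  induction n with
  | zero => simp [hF0, hH0, Matrix.mulVec_zero]
  | succ n ih =>
    rw [hF n, hH n]
    have key : ∀ v : Fin N → ℝ,
        (1 + α n • ((P - 1) * single (ι n) (ι n) 1)) *ᵥ v
        = v + α n • (P *ᵥ (single (ι n) (ι n) 1 *ᵥ v))
          - α n • (single (ι n) (ι n) 1 *ᵥ v) := by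
      intro v
      simp [Matrix.add_mulVec, Matrix.smul_mulVec, Matrix.sub_mul,
        Matrix.sub_mulVec, Matrix.mulVec_mulVec, smul_sub, ← Matrix.smul_single]
      abel
    rw [key]
    rw [Matrix.mulVec_add, Matrix.mulVec_smul]
    have := ih
    funext i
    have h := congrFun ih i
    simp only [Pi.add_apply, Pi.sub_apply, Pi.smul_apply, smul_eq_mul] at h ⊢
    linarith
end

section
/- Partial diffusion monotonicity: if two partial diffusion schemes (F^α_n, H^α_n) and (F^{α'}_n, H^{α'}_n) start from the same F_0 ≥ 0 and H_0 = 0, use the same index sequence I, and satisfy 0 ≤ α_n ≤ α'_n ≤ 1 for all n, then for all n: H^{α'}_n ≥ H^α_n entrywise and H^{α'}_n + F^{α'}_n ≥ H^α_n + F^α_n entrywise (no condition on ρ(P) needed, only P ≥ 0). -/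
open Matrix BigOperators

lemma pd_aux1 {N : ℕ} (P : Matrix (Fin N) (Fin N) ℝ) (a : ℝ) (i : Fin N)
    (F : Fin N → ℝ) (j : Fin N) :
    ((1 + a • ((P - 1) * Matrix.single i i 1)) *ᵥ F) j
      = F j + a * ((P j i - if j = i then 1 else 0) * F i) := by
  simp [mulVec, dotProduct, Matrix.add_apply, Matrix.one_apply, Matrix.mul_apply,
    Matrix.single, Matrix.sub_apply, mul_add, add_mul, Finset.sum_add_distrib,
    Finset.sum_ite_eq, ite_and, mul_comm, mul_left_comm]

lemma pd_aux2 {N : ℕ} (i : Fin N) (F : Fin N → ℝ) (j : Fin N) :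
    (Matrix.single i i 1 *ᵥ F) j = if j = i then F i else 0 := by
  by_cases h : j = i
  · subst h; simp [mulVec, dotProduct, Matrix.single, ite_and, Finset.sum_ite_eq]
  · simp only [if_neg h]
    simp [mulVec, dotProduct, Matrix.single, ite_and, h]
    intro h'; exact absurd h'.symm h

lemma pd_aux3 {N : ℕ} (P : Matrix (Fin N) (Fin N) ℝ) (H : Fin N → ℝ) (a c : ℝ)
    (i j : Fin N) :
    (∑ k, P j k * (H k + a * (if k = i then c else 0)))
      = (∑ k, P j k * H k) + a * (P j i * c) := by
  have e : ∀ k, P j k * (H k + a * (if k = i then c else 0))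
      = P j k * H k + (if k = i then a * (P j k * c) else 0) := by
    intro k; by_cases h : k = i <;> simp [h] <;> ring
  simp only [e, Finset.sum_add_distrib, Finset.sum_ite_eq, Finset.sum_ite_eq',
    Finset.mem_univ, if_true]

/-- partial diffusion monotonicity: if the two schemes start from the same
`F_0 ≥ 0`, use the same index sequence, and `0 ≤ α_n ≤ α'_n ≤ 1`, then for all `n`,
`H^{α'}_n ≥ H^α_n` and `H^{α'}_n + F^{α'}_n ≥ H^α_n + F^α_n` entrywise. -/
theorem partial_diffusion_monotone {N : ℕ} (P : Matrix (Fin N) (Fin N) ℝ)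
    (F₀ : Fin N → ℝ) (hPpos : ∀ i j, 0 ≤ P i j) (hF₀ : ∀ i, 0 ≤ F₀ i)
    (α α' : ℕ → ℝ) (hα0 : ∀ n, 0 ≤ α n) (hαα' : ∀ n, α n ≤ α' n) (hα'1 : ∀ n, α' n ≤ 1)
    (ι : ℕ → Fin N) (F F' H H' : ℕ → Fin N → ℝ)
    (hF0 : F 0 = F₀) (hF'0 : F' 0 = F₀) (hH0 : H 0 = 0) (hH'0 : H' 0 = 0)
    (hF : ∀ n, F (n + 1) =
      (1 + α n • ((P - 1) * Matrix.single (ι n) (ι n) 1)) *ᵥ F n)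
    (hF' : ∀ n, F' (n + 1) =
      (1 + α' n • ((P - 1) * Matrix.single (ι n) (ι n) 1)) *ᵥ F' n)
    (hH : ∀ n, H (n + 1) = H n + α n • (Matrix.single (ι n) (ι n) 1 *ᵥ F n))
    (hH' : ∀ n, H' (n + 1) = H' n + α' n • (Matrix.single (ι n) (ι n) 1 *ᵥ F' n)) :
    ∀ n i, H n i ≤ H' n i ∧ H n i + F n i ≤ H' n i + F' n i := by
  -- strengthened invariant: nonnegativity, H ≤ H', and the conservation identities
  -- F_n = (P - I) H_n + F₀ for both schemes.
  have key : ∀ n, (∀ j, 0 ≤ F n j) ∧ (∀ j, 0 ≤ F' n j) ∧ (∀ j, H n j ≤ H' n j) ∧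
      (∀ j, F n j = (∑ k, P j k * H n k) - H n j + F₀ j) ∧
      (∀ j, F' n j = (∑ k, P j k * H' n k) - H' n j + F₀ j) := by
    intro n
    induction n with
    | zero =>
      refine ⟨?_, ?_, ?_, ?_, ?_⟩ <;> intro j <;>
        simp [hF0, hF'0, hH0, hH'0, hF₀ j]
    | succ n ih =>
      obtain ⟨hFpos, hF'pos, hHH', hid, hid'⟩ := ih
      have hα'0 : 0 ≤ α' n := le_trans (hα0 n) (hαα' n)
      have hα1 : α n ≤ 1 := le_trans (hαα' n) (hα'1 n)
      set i := ι n with hi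
      have eF : ∀ j, F (n+1) j = F n j + α n * ((P j i - if j = i then 1 else 0) * F n i) := by
        intro j; rw [hF n]; exact pd_aux1 P (α n) i (F n) j
      have eF' : ∀ j, F' (n+1) j = F' n j + α' n * ((P j i - if j = i then 1 else 0) * F' n i) := by
        intro j; rw [hF' n]; exact pd_aux1 P (α' n) i (F' n) j
      have eH : ∀ j, H (n+1) j = H n j + α n * (if j = i then F n i else 0) := by
        intro j; rw [hH n]; simp [pd_aux2]; rfl
      have eH' : ∀ j, H' (n+1) j = H' n j + α' n * (if j = i then F' n i else 0) := by
        intro j; rw [hH' n]; simp [pd_aux2]; rfl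
      refine ⟨?_, ?_, ?_, ?_, ?_⟩ <;> intro j
      · -- 0 ≤ F (n+1)
        rw [eF j]
        by_cases h : j = i
        · rw [h]
          simp only [eq_self_iff_true, if_true]
          nlinarith [hFpos i, hPpos i i, mul_nonneg (hα0 n) (mul_nonneg (hPpos i i) (hFpos i)),
            mul_nonneg (sub_nonneg.2 hα1) (hFpos i)]
        · simp only [if_neg h, sub_zero]
          nlinarith [hFpos j, mul_nonneg (hα0 n) (mul_nonneg (hPpos j i) (hFpos i))]
      · -- 0 ≤ F' (n+1)
        rw [eF' j]
        by_cases h : j = i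
        · rw [h]
          simp only [eq_self_iff_true, if_true]
          nlinarith [hF'pos i, hPpos i i, mul_nonneg hα'0 (mul_nonneg (hPpos i i) (hF'pos i)),
            mul_nonneg (sub_nonneg.2 (hα'1 n)) (hF'pos i)]
        · simp only [if_neg h, sub_zero]
          nlinarith [hF'pos j, mul_nonneg hα'0 (mul_nonneg (hPpos j i) (hF'pos i))]
      · -- H (n+1) ≤ H' (n+1)
        rw [eH j, eH' j]
        by_cases h : j = i
        · rw [h]
          simp only [eq_self_iff_true, if_true]
          have hS : 0 ≤ ∑ k, P i k * (H' n k - H n k) :=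
            Finset.sum_nonneg fun k _ =>
              mul_nonneg (hPpos i k) (sub_nonneg.2 (hHH' k))
          have hE : F n i - F' n i = (H' n i - H n i) - ∑ k, P i k * (H' n k - H n k) := by
            rw [hid i, hid' i]
            simp only [mul_sub, Finset.sum_sub_distrib]
            ring
          nlinarith [mul_nonneg (hα0 n) hS,
            mul_nonneg (sub_nonneg.2 (hαα' n)) (hF'pos i),
            mul_nonneg (sub_nonneg.2 hα1) (sub_nonneg.2 (hHH' i))]
        · simp only [if_neg h]
          simpa using hHH' j
      · -- identity for F
        rw [eF j, hid j]
        have : ∀ k, H (n+1) k = H n k + α n * (if k = i then F n i else 0) := eH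
        simp only [this j, eH]
        rw [pd_aux3 P (H n) (α n) (F n i) i j]
        by_cases h : j = i <;> simp [h] <;> ring
      · -- identity for F'
        rw [eF' j, hid' j]
        simp only [eH']
        rw [pd_aux3 P (H' n) (α' n) (F' n i) i j]
        by_cases h : j = i <;> simp [h] <;> ring
  intro n j
  obtain ⟨hFpos, hF'pos, hHH', hid, hid'⟩ := key n
  refine ⟨hHH' j, ?_⟩
  rw [hid j, hid' j]
  have : (∑ k, P j k * H n k) ≤ ∑ k, P j k * H' n k :=
    Finset.sum_le_sum fun k _ => mul_le_mul_of_nonneg_left (hHH' k) (hPpos j k)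
  linarith
end

section
/- Negative-fluid-only diffusion with ρ(P) < 1: if the D-iteration starts from F_0 = P·e − e (where e = (1/N,…,1/N)^T), only coordinates with negative fluid are ever diffused, the selection is fair among coordinates with negative fluid, and ρ(P) < 1, then H_n converges to −e, i.e., the limit H satisfies H = −e and the residual fluid tends to 0. -/
open Matrix BigOperators Filter Topology

lemma aux_pow_tendsto_zero {A : Type*} [NormedRing A] [NormedAlgebra ℂ A] [CompleteSpace A]
    (a : A) (h : spectralRadius ℂ a < 1) :
    Tendsto (fun n : ℕ => a ^ n) atTop (𝓝 0) := by
  obtain ⟨r, hr1, hr2⟩ := ENNReal.lt_iff_exists_nnreal_btwn.mp h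
  have hG := spectrum.pow_nnnorm_pow_one_div_tendsto_nhds_spectralRadius a
  have hev : ∀ᶠ n : ℕ in atTop, (‖a ^ n‖₊ : ENNReal) ^ (1 / (n:ℝ)) < (r : ENNReal) :=
    hG.eventually_lt_const hr1
  have key : ∀ᶠ n : ℕ in atTop, ‖a ^ n‖ ≤ (r:ℝ) ^ n := by
    filter_upwards [hev, eventually_ge_atTop 1] with n hn hn1
    have hn0 : (n:ℝ) ≠ 0 := by positivity
    have : ((‖a ^ n‖₊ : ENNReal) ^ (1 / (n:ℝ))) ^ (n:ℝ) ≤ (r : ENNReal) ^ (n:ℝ) :=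
      ENNReal.rpow_le_rpow hn.le (by positivity)
    rw [← ENNReal.rpow_mul, one_div, inv_mul_cancel₀ hn0, ENNReal.rpow_one,
      ENNReal.rpow_natCast, ← ENNReal.coe_pow, ENNReal.coe_le_coe] at this
    calc ‖a ^ n‖ = ((‖a ^ n‖₊ : NNReal) : ℝ) := rfl
      _ ≤ ((r ^ n : NNReal) : ℝ) := by exact_mod_cast this
      _ = (r:ℝ) ^ n := by push_cast; ring
  have hrlt : (r:ℝ) < 1 := by exact_mod_cast hr2
  exact squeeze_zero_norm' key (tendsto_pow_atTop_nhds_zero_of_lt_one r.coe_nonneg hrlt)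

lemma aux_matrix_pow_entry_tendsto_zero {N : ℕ} (hN : 0 < N)
    (Q : Matrix (Fin N) (Fin N) ℂ)
    (hρ : ∀ μ ∈ spectrum ℂ Q, ‖μ‖ < 1) (i j : Fin N) :
    Tendsto (fun k : ℕ => ‖(Q ^ k) i j‖) atTop (𝓝 0) := by
  letI : NormedRing (Matrix (Fin N) (Fin N) ℂ) := Matrix.linftyOpNormedRing
  letI : NormedAlgebra ℂ (Matrix (Fin N) (Fin N) ℂ) := Matrix.linftyOpNormedAlgebra
  haveI : Nonempty (Fin N) := ⟨⟨0, hN⟩⟩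
  haveI : CompleteSpace (Matrix (Fin N) (Fin N) ℂ) := FiniteDimensional.complete ℂ _
  have hsr : spectralRadius ℂ Q < 1 := by
    have := spectrum.spectralRadius_lt_of_forall_lt (a := Q) (r := 1)
      (fun z hz => by simpa [← NNReal.coe_lt_coe] using hρ z hz)
    simpa using this
  have hpow := aux_pow_tendsto_zero Q hsr
  have hn : Tendsto (fun k : ℕ => ‖Q ^ k‖) atTop (𝓝 0) := by
    simpa using hpow.norm
  refine squeeze_zero (fun k => norm_nonneg _) (fun k => ?_) hn
  have h1 : ‖(Q ^ k) i j‖₊ ≤ ‖Q ^ k‖₊ := by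
    rw [Matrix.linfty_opNNNorm_def]
    calc ‖(Q ^ k) i j‖₊ ≤ ∑ j', ‖(Q ^ k) i j'‖₊ :=
          Finset.single_le_sum (f := fun j' => ‖(Q ^ k) i j'‖₊) (fun j' _ => zero_le)
            (Finset.mem_univ j)
      _ ≤ _ := Finset.le_sup (f := fun i => ∑ j', ‖(Q ^ k) i j'‖₊) (Finset.mem_univ i)
  exact_mod_cast h1

lemma aux_real_pow_entry_tendsto_zero {N : ℕ} (hN : 0 < N)
    (P : Matrix (Fin N) (Fin N) ℝ)
    (hρ : ∀ μ ∈ spectrum ℂ (P.map (algebraMap ℝ ℂ)), ‖μ‖ < 1) (i j : Fin N) :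
    Tendsto (fun k : ℕ => (P ^ k) i j) atTop (𝓝 0) := by
  have key := aux_matrix_pow_entry_tendsto_zero hN (P.map (algebraMap ℝ ℂ)) hρ i j
  refine squeeze_zero_norm (fun k => le_of_eq ?_) key
  have hmap : (P.map (algebraMap ℝ ℂ)) ^ k = (P ^ k).map (algebraMap ℝ ℂ) := by
    rw [← RingHom.mapMatrix_apply, ← RingHom.mapMatrix_apply, map_pow]
  rw [hmap]
  simp [Matrix.map_apply, Complex.norm_real]

lemma aux_std_mulVec {N : ℕ} (a : Fin N) (v : Fin N → ℝ) (i : Fin N) :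
    (Matrix.single a a (1:ℝ) *ᵥ v) i = if i = a then v a else 0 := by
  simp [Matrix.mulVec, dotProduct, Matrix.single, ite_and, eq_comm]

/-- negative-fluid-only diffusion with `ρ(P) < 1`: starting from
`F_0 = P·e - e` with `e = (1/N,…,1/N)`, diffusing only coordinates with negative fluid
along a fair sequence, `H_n` converges to `-e` and the residual fluid tends to `0`. -/
theorem negative_diffusion_converges {N : ℕ} (hN : 0 < N)
    (P : Matrix (Fin N) (Fin N) ℝ) (hPpos : ∀ i j, 0 ≤ P i j)
    (hρ : ∀ μ ∈ spectrum ℂ (P.map (algebraMap ℝ ℂ)), ‖μ‖ < 1)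
    (ι : ℕ → Fin N) (hfair : ∀ i : Fin N, ∀ m : ℕ, ∃ n ≥ m, ι n = i)
    (F H : ℕ → Fin N → ℝ)
    (hF0 : F 0 = P *ᵥ (fun _ => (1 : ℝ) / N) - fun _ => (1 : ℝ) / N)
    (hH0 : H 0 = 0)
    (hF : ∀ n, F (n + 1) = if F n (ι n) < 0 then
      (1 - Matrix.single (ι n) (ι n) 1 + P * Matrix.single (ι n) (ι n) 1) *ᵥ F n
      else F n)
    (hH : ∀ n, H (n + 1) = if F n (ι n) < 0 then
      H n + Matrix.single (ι n) (ι n) 1 *ᵥ F n else H n) :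
    Tendsto H atTop (𝓝 fun _ => -((1 : ℝ) / N)) ∧ Tendsto F atTop (𝓝 0) := by
  set e : Fin N → ℝ := fun _ => (1 : ℝ) / N with he
  -- the invariant
  have hinv : ∀ n, F n = (P - 1) *ᵥ (e + H n) := by
    intro n
    induction n with
    | zero => rw [hH0, hF0]; simp [Matrix.sub_mulVec, Matrix.one_mulVec]
    | succ n ih =>
      by_cases hc : F n (ι n) < 0
      · rw [hF n, if_pos hc, hH n, if_pos hc]
        rw [Matrix.add_mulVec, Matrix.sub_mulVec, Matrix.one_mulVec,
          ← Matrix.mulVec_mulVec]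
        have : e + (H n + Matrix.single (ι n) (ι n) 1 *ᵥ F n)
            = (e + H n) + Matrix.single (ι n) (ι n) 1 *ᵥ F n := by
          abel
        rw [this, Matrix.mulVec_add, ← ih, Matrix.sub_mulVec, Matrix.one_mulVec]
        abel
      · rw [hF n, if_neg hc, hH n, if_neg hc, ih]
  -- entrywise update for H
  have hHstep : ∀ n i, H (n + 1) i =
      if F n (ι n) < 0 ∧ i = ι n then H n i + F n (ι n) else H n i := by
    intro n i
    rw [hH n]
    by_cases hc : F n (ι n) < 0
    · rw [if_pos hc]
      by_cases hi : i = ι n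
      · rw [if_pos ⟨hc, hi⟩]
        simp [hi, aux_std_mulVec]
      · rw [if_neg (fun h => hi h.2)]
        simp [aux_std_mulVec, hi]
    · rw [if_neg hc, if_neg (fun h => hc h.1)]
  -- H is entrywise antitone
  have hanti : ∀ i, Antitone fun n => H n i := by
    intro i
    refine antitone_nat_of_succ_le fun n => ?_
    rw [hHstep n i]
    by_cases hc : F n (ι n) < 0 ∧ i = ι n
    · rw [if_pos hc]; linarith [hc.1]
    · rw [if_neg hc]
  -- nonnegativity of G n = e + H n
  have hGpos : ∀ n i, 0 ≤ e i + H n i := by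
    intro n
    induction n with
    | zero =>
      intro i; rw [hH0]
      simp only [he, Pi.zero_apply, add_zero]
      positivity
    | succ n ih =>
      intro i
      rw [hHstep n i]
      by_cases hc : F n (ι n) < 0 ∧ i = ι n
      · rw [if_pos hc]
        obtain ⟨hneg, hi⟩ := hc
        have hFi : F n (ι n) = ((P - 1) *ᵥ (e + H n)) (ι n) := by rw [hinv n]
        rw [hi, hFi]
        have h3 : ((P - 1) *ᵥ (e + H n)) (ι n)
            = (P *ᵥ (e + H n)) (ι n) - (e (ι n) + H n (ι n)) := by
          rw [Matrix.sub_mulVec, Matrix.one_mulVec]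
          simp
        rw [h3]
        have h5 : 0 ≤ (P *ᵥ (e + H n)) (ι n) := by
          show 0 ≤ ∑ j, P (ι n) j * (e + H n) j
          exact Finset.sum_nonneg fun j _ => mul_nonneg (hPpos (ι n) j) (ih j)
        linarith
      · rw [if_neg hc]; exact ih i
  -- lower bound for H
  have hHlb : ∀ n i, -((1:ℝ)/N) ≤ H n i := by
    intro n i
    have := hGpos n i
    simp only [he] at this ⊢
    linarith
  -- limits of coordinates of H
  set L : Fin N → ℝ := fun i => ⨅ n, H n i with hL
  have hHconv : ∀ i, Tendsto (fun n => H n i) atTop (𝓝 (L i)) := by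
    intro i
    exact tendsto_atTop_ciInf (hanti i) ⟨-((1:ℝ)/N), by rintro x ⟨n, rfl⟩; exact hHlb n i⟩
  -- convergence of F
  have hFconv : ∀ i, Tendsto (fun n => F n i) atTop (𝓝 (((P - 1) *ᵥ (e + L)) i)) := by
    intro i
    have heq : ∀ n, F n i = ∑ j, (P - 1) i j * (e j + H n j) := by
      intro n
      rw [hinv n]
      rfl
    simp only [heq]
    have hlim : ((P - 1) *ᵥ (e + L)) i = ∑ j, (P - 1) i j * (e j + L j) := rfl
    rw [hlim]
    exact tendsto_finset_sum _ fun j _ =>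
      (tendsto_const_nhds.add (hHconv j)).const_mul _
  -- limit fluid is nonnegative
  have hFlim_nonneg : ∀ i, 0 ≤ ((P - 1) *ᵥ (e + L)) i := by
    intro i
    by_contra hneg
    push_neg at hneg
    set c : ℝ := ((P - 1) *ᵥ (e + L)) i with hc
    have hc2 : c < c / 2 := by linarith
    have h1 : ∀ᶠ n in atTop, F n i < c / 2 := (hFconv i).eventually_lt_const hc2
    have hd : Tendsto (fun n => H (n + 1) i - H n i) atTop (𝓝 0) := by
      have := ((hHconv i).comp (tendsto_add_atTop_nat 1)).sub (hHconv i)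
      simpa using this
    have h2 : ∀ᶠ n in atTop, c / 2 < H (n + 1) i - H n i :=
      hd.eventually_const_lt (by linarith)
    have hfreq : ∃ᶠ n in atTop, ι n = i := by
      rw [frequently_atTop]
      intro m
      obtain ⟨n, hn, hni⟩ := hfair i m
      exact ⟨n, hn, hni⟩
    obtain ⟨n, hni, hn1, hn2⟩ := (hfreq.and_eventually (h1.and h2)).exists
    have hFneg : F n (ι n) < 0 := by rw [hni]; linarith
    have := hHstep n i
    rw [if_pos ⟨hFneg, hni.symm⟩, hni] at this
    rw [this] at hn2
    simp only [add_sub_cancel_left] at hn2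
    linarith
  -- e + L is nonnegative
  have hGLpos : ∀ i, 0 ≤ e i + L i := by
    intro i
    have : -e i ≤ L i := le_ciInf fun n => by
      have := hGpos n i; linarith
    linarith
  -- e + L ≤ P^k (e + L)
  have hiter : ∀ k i, e i + L i ≤ ((P ^ k) *ᵥ (e + L)) i := by
    intro k
    induction k with
    | zero => intro i; simp [Matrix.one_mulVec]
    | succ k ih =>
      intro i
      have hstep : ∀ j, e j + L j ≤ (P *ᵥ (e + L)) j := by
        intro j
        have := hFlim_nonneg j
        rw [Matrix.sub_mulVec, Matrix.one_mulVec] at this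
        simp only [Pi.sub_apply] at this
        have h2 : (e + L) j = e j + L j := rfl
        linarith [this]
      calc e i + L i ≤ ((P ^ k) *ᵥ (e + L)) i := ih i
        _ ≤ ((P ^ k) *ᵥ (P *ᵥ (e + L))) i := by
            have hPk : ∀ i j, 0 ≤ (P ^ k) i j := by
              clear ih
              induction k with
              | zero => intro i j; by_cases h : i = j <;> simp [pow_zero, Matrix.one_apply, h]
              | succ k ihk =>
                intro i j
                rw [pow_succ, Matrix.mul_apply]
                exact Finset.sum_nonneg fun l _ => mul_nonneg (ihk i l) (hPpos l j)
            show ∑ j, (P ^ k) i j * (e + L) j ≤ ∑ j, (P ^ k) i j * (P *ᵥ (e + L)) j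
            exact Finset.sum_le_sum fun j _ =>
              mul_le_mul_of_nonneg_left (hstep j) (hPk i j)
        _ = ((P ^ (k + 1)) *ᵥ (e + L)) i := by
            rw [Matrix.mulVec_mulVec, pow_succ]
  -- P^k (e+L) → 0 entrywise
  have hzero : ∀ i, Tendsto (fun k => ((P ^ k) *ᵥ (e + L)) i) atTop (𝓝 0) := by
    intro i
    have : ∀ k, ((P ^ k) *ᵥ (e + L)) i = ∑ j, (P ^ k) i j * (e j + L j) := fun k => rfl
    simp only [this]
    have : (0:ℝ) = ∑ j : Fin N, 0 * (e j + L j) := by simp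
    rw [this]
    exact tendsto_finset_sum _ fun j _ =>
      (aux_real_pow_entry_tendsto_zero hN P hρ i j).mul_const _
  -- conclude e + L = 0
  have hGL0 : ∀ i, e i + L i = 0 := by
    intro i
    have hle : e i + L i ≤ 0 :=
      ge_of_tendsto' (hzero i) fun k => hiter k i
    exact le_antisymm hle (hGLpos i)
  have hLval : ∀ i, L i = -((1:ℝ)/N) := by
    intro i
    have := hGL0 i
    simp only [he] at this
    linarith
  constructor
  · rw [tendsto_pi_nhds]
    intro i
    rw [← hLval i]
    exact hHconv i
  · rw [tendsto_pi_nhds]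
    intro i
    have : e + L = 0 := funext fun i => hGL0 i
    have h0 : ((P - 1) *ᵥ (e + L)) i = 0 := by
      rw [this]; simp [Matrix.mulVec_zero]
    have := hFconv i
    rw [h0] at this
    exact this
end

section
/- Extended monotonicity for negative-fluid diffusion: let (G_n) and (G_n') be sequences of non-positive vectors with ∑_{i=1}^n G_i ≤ ∑_{i=1}^n G_i' entrywise for all n, and let I be a fixed sequence where at each candidate step a coordinate is diffused only if its fluid is negative. Then for all n, H_n(P, B, I, G) ≤ H_n(P, B, I, G') entrywise. -/
open Matrix BigOperators

/-- extended monotonicity for negative-fluid diffusion: if `G_n, G_n' ≤ 0`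
with `∑_{k≤n} G_k ≤ ∑_{k≤n} G_k'` entrywise, and each system diffuses a candidate
coordinate only when its fluid is negative (same candidate sequence), then
`H_n(P,B,I,G) ≤ H_n(P,B,I,G')` entrywise for all `n`. -/
theorem negative_diffusion_monotone {N : ℕ} (P : Matrix (Fin N) (Fin N) ℝ)
    (B : Fin N → ℝ) (hPpos : ∀ i j, 0 ≤ P i j)
    (G G' : ℕ → Fin N → ℝ)
    (hGneg : ∀ n i, G n i ≤ 0) (hG'neg : ∀ n i, G' n i ≤ 0)
    (hGG' : ∀ n i, ∑ k ∈ Finset.range (n + 1), G k i ≤ ∑ k ∈ Finset.range (n + 1), G' k i)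
    (ι : ℕ → Fin N) (F F' H H' : ℕ → Fin N → ℝ)
    (hF0 : F 0 = B) (hF'0 : F' 0 = B) (hH0 : H 0 = 0) (hH'0 : H' 0 = 0)
    (hF : ∀ n, F (n + 1) = if (F n + G n) (ι n) < 0 then
      (1 - single (ι n) (ι n) 1 + P * single (ι n) (ι n) 1) *ᵥ (F n + G n)
      else F n + G n)
    (hF' : ∀ n, F' (n + 1) = if (F' n + G' n) (ι n) < 0 then
      (1 - single (ι n) (ι n) 1 + P * single (ι n) (ι n) 1) *ᵥ (F' n + G' n)
      else F' n + G' n)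
    (hH : ∀ n, H (n + 1) = if (F n + G n) (ι n) < 0 then
      H n + single (ι n) (ι n) 1 *ᵥ (F n + G n) else H n)
    (hH' : ∀ n, H' (n + 1) = if (F' n + G' n) (ι n) < 0 then
      H' n + single (ι n) (ι n) 1 *ᵥ (F' n + G' n) else H' n) :
    ∀ n i, H n i ≤ H' n i := by
  -- pointwise action of the single-entry matrix
  have hJ : ∀ (i : Fin N) (w : Fin N → ℝ) (j : Fin N),
      (single i i (1:ℝ) *ᵥ w) j = if j = i then w i else 0 := by
    intro i w j
    simp [mulVec, dotProduct, single, ite_and, eq_comm]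
  have hJfun : ∀ (i : Fin N) (w : Fin N → ℝ),
      (single i i (1:ℝ) *ᵥ w) = fun j => if j = i then w i else 0 :=
    fun i w => funext (hJ i w)
  -- pointwise action of the diffusion matrix
  have hM : ∀ (i : Fin N) (w : Fin N → ℝ) (j : Fin N),
      ((1 - single i i (1:ℝ) + P * single i i 1) *ᵥ w) j
        = w j - (if j = i then w i else 0) + P j i * w i := by
    intro i w j
    have h1 : ((1 - single i i (1:ℝ) + P * single i i 1) *ᵥ w)
        = w - single i i (1:ℝ) *ᵥ w + P *ᵥ (single i i (1:ℝ) *ᵥ w) := by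
      rw [add_mulVec, sub_mulVec, one_mulVec, mulVec_mulVec]
    have h2 : (P *ᵥ (single i i (1:ℝ) *ᵥ w)) j = P j i * w i := by
      rw [hJfun i w]
      simp [mulVec, dotProduct, mul_ite, Finset.sum_ite_eq']
    rw [h1]
    simp only [Pi.add_apply, Pi.sub_apply]
    rw [hJ i w j, h2]
  -- one-step pointwise formulas (both systems)
  have hHstep : ∀ n j, H (n+1) j
      = H n j + (if j = ι n then min ((F n + G n) (ι n)) 0 else 0) := by
    intro n j
    by_cases h : (F n + G n) (ι n) < 0
    · rw [hH n, if_pos h, min_eq_left h.le]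
      simp only [Pi.add_apply]
      rw [hJ]
      simp
    · rw [hH n, if_neg h, min_eq_right (not_lt.mp h)]
      simp
  have hH'step : ∀ n j, H' (n+1) j
      = H' n j + (if j = ι n then min ((F' n + G' n) (ι n)) 0 else 0) := by
    intro n j
    by_cases h : (F' n + G' n) (ι n) < 0
    · rw [hH' n, if_pos h, min_eq_left h.le]
      simp only [Pi.add_apply]
      rw [hJ]
      simp
    · rw [hH' n, if_neg h, min_eq_right (not_lt.mp h)]
      simp
  have hFstep : ∀ n j, F (n+1) j
      = (F n + G n) j - (if j = ι n then min ((F n + G n) (ι n)) 0 else 0)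
        + P j (ι n) * min ((F n + G n) (ι n)) 0 := by
    intro n j
    by_cases h : (F n + G n) (ι n) < 0
    · rw [hF n, if_pos h, min_eq_left h.le, hM]
    · rw [hF n, if_neg h, min_eq_right (not_lt.mp h)]
      simp
  have hF'step : ∀ n j, F' (n+1) j
      = (F' n + G' n) j - (if j = ι n then min ((F' n + G' n) (ι n)) 0 else 0)
        + P j (ι n) * min ((F' n + G' n) (ι n)) 0 := by
    intro n j
    by_cases h : (F' n + G' n) (ι n) < 0
    · rw [hF' n, if_pos h, min_eq_left h.le, hM]
    · rw [hF' n, if_neg h, min_eq_right (not_lt.mp h)]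
      simp
  -- main invariant
  have key : ∀ n,
      (∀ j, F n j = B j + (∑ k ∈ Finset.range n, G k j) + ((P *ᵥ H n) j - H n j)) ∧
      (∀ j, F' n j = B j + (∑ k ∈ Finset.range n, G' k j) + ((P *ᵥ H' n) j - H' n j)) ∧
      (∀ j, H n j ≤ H' n j) := by
    intro n
    induction n with
    | zero => simp [hF0, hF'0, hH0, hH'0]
    | succ n ih =>
      obtain ⟨ihA, ihA', ihC⟩ := ih
      have hPH : ∀ j, (P *ᵥ H (n+1)) j
          = (P *ᵥ H n) j + P j (ι n) * min ((F n + G n) (ι n)) 0 := by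
        intro j
        simp only [mulVec, dotProduct]
        calc ∑ k, P j k * H (n+1) k
            = ∑ k, (P j k * H n k
              + P j k * (if k = ι n then min ((F n + G n) (ι n)) 0 else 0)) := by
              refine Finset.sum_congr rfl fun k _ => ?_
              rw [hHstep n k, mul_add]
          _ = (∑ k, P j k * H n k) + P j (ι n) * min ((F n + G n) (ι n)) 0 := by
              rw [Finset.sum_add_distrib]
              congr 1
              simp [mul_ite, Finset.sum_ite_eq']
      have hPH' : ∀ j, (P *ᵥ H' (n+1)) j
          = (P *ᵥ H' n) j + P j (ι n) * min ((F' n + G' n) (ι n)) 0 := by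
        intro j
        simp only [mulVec, dotProduct]
        calc ∑ k, P j k * H' (n+1) k
            = ∑ k, (P j k * H' n k
              + P j k * (if k = ι n then min ((F' n + G' n) (ι n)) 0 else 0)) := by
              refine Finset.sum_congr rfl fun k _ => ?_
              rw [hH'step n k, mul_add]
          _ = (∑ k, P j k * H' n k) + P j (ι n) * min ((F' n + G' n) (ι n)) 0 := by
              rw [Finset.sum_add_distrib]
              congr 1
              simp [mul_ite, Finset.sum_ite_eq']
      refine ⟨?_, ?_, ?_⟩
      · intro j
        have e1 := ihA j
        rw [hFstep n j, hPH j, hHstep n j, Finset.sum_range_succ]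
        simp only [Pi.add_apply] at e1 ⊢
        linarith
      · intro j
        have e1 := ihA' j
        rw [hF'step n j, hPH' j, hH'step n j, Finset.sum_range_succ]
        simp only [Pi.add_apply] at e1 ⊢
        linarith
      · intro j
        rw [hHstep n j, hH'step n j]
        by_cases hj : j = ι n
        · rw [hj]
          simp only [if_pos rfl, eq_self_iff_true, if_true]
          set j := ι n with hjdef
          have hd : 0 ≤ H' n j - H n j := by linarith [ihC j]
          have hPd : (P *ᵥ H n) j ≤ (P *ᵥ H' n) j := by
            simp only [mulVec, dotProduct]
            exact Finset.sum_le_sum fun k _ =>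
              mul_le_mul_of_nonneg_left (ihC k) (hPpos j k)
          have hsum := hGG' n j
          rw [Finset.sum_range_succ, Finset.sum_range_succ] at hsum
          have e1 := ihA j
          have e1' := ihA' j
          have hw : (F n + G n) j - (H' n j - H n j) ≤ (F' n + G' n) j := by
            simp only [Pi.add_apply] at e1 e1' ⊢
            linarith
          have hm : min ((F n + G n) j) 0 - (H' n j - H n j)
              ≤ min ((F' n + G' n) j) 0 := by
            refine le_min ?_ ?_
            · linarith [min_le_left ((F n + G n) j) 0]
            · linarith [min_le_right ((F n + G n) j) 0]
          linarith
        · simp only [if_neg hj]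
          simpa using ihC j
  intro n i
  exact (key n).2.2 i
end
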